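/- arXiv:1510.03660 — 7 statements merged into one kernel-verified Lean document; each statement's English description precedes it below -/
import Mathlib

section
/- Let N ≥ 3 be an integer and a ∈ ℝ with −((N−2)/2)² < a < 0, and set α = (N−2)/2 − √(((N−2)/2)² + a), so that α > 0. Define u : (ℝ^N ∖ {0}) × ℝ → ℂ by u(x,t) = (1+t²)^(−N/4+α/2) · |x|^(−α) · exp(−|x|²/(4(1+t²))) · exp(i t |x|²/(4(1+t²))) · exp(−i (N/2 − α) arctan t). Then: (i) the function x ↦ u(x,0) is integrable and square-integrable on ℝ^N; (ii) for every t ∈ ℝ, the function x ↦ u(x,t) is not essentially bounded on ℝ^N with respect to Lebesgue measure, i.e. its essential supremum is +∞. In particular this solution of the Schrödinger equation with potential a/|x|² has L¹ initial datum but never lies in L^∞, so the classical L¹→L^∞ decay estimate fails when a < 0. -/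
open MeasureTheory Real

open Set Metric in
lemma rpow_exp_integrable {N : ℕ} (hN : 0 < N) {p c : ℝ} (hp : p < N) (hc : 0 < c) :
    Integrable (fun x : EuclideanSpace ℝ (Fin N) => ‖x‖ ^ (-p) * Real.exp (-‖x‖ ^ 2 / c))
      (volume : Measure (EuclideanSpace ℝ (Fin N))) := by
  set E := EuclideanSpace ℝ (Fin N)
  have dimE : Module.finrank ℝ E = N := finrank_euclideanSpace_fin
  haveI : Nontrivial E := by
    apply Module.nontrivial_of_finrank_pos (R := ℝ)
    rw [dimE]; exact hN
  set h : ℝ → ENNReal := fun r => ENNReal.ofReal (r ^ (-p) * Real.exp (-r ^ 2 / c)) with hh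
  have hhm : Measurable h :=
    ENNReal.measurable_ofReal.comp ((measurable_id'.pow_const (-p)).mul
      (((measurable_id'.pow_const 2).neg.div_const c).exp))
  have hfm : Measurable (fun x : E => ‖x‖ ^ (-p) * Real.exp (-‖x‖ ^ 2 / c)) :=
    ((measurable_norm.pow_const (-p)).mul
      (((measurable_norm.pow_const 2).neg.div_const c).exp))
  refine ⟨hfm.aestronglyMeasurable, ?_⟩
  have hnn : ∀ x : E, 0 ≤ ‖x‖ ^ (-p) * Real.exp (-‖x‖ ^ 2 / c) := fun x => by positivity
  have e1 : ∫⁻ x, ‖(‖x‖ ^ (-p) * Real.exp (-‖x‖ ^ 2 / c) : ℝ)‖ₑ ∂(volume : Measure E)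
      = ∫⁻ x, h ‖x‖ ∂(volume : Measure E) := by
    refine lintegral_congr fun x => ?_
    rw [hh]; exact Real.enorm_eq_ofReal (hnn x)
  rw [HasFiniteIntegral, e1]
  -- polar coordinates
  have e3 := setLIntegral_subtype (μ := (volume : Measure E)) (measurableSet_singleton (0:E)).compl univ (fun x => h ‖x‖)
  rw [Measure.restrict_univ, image_univ, Subtype.range_coe] at e3
  have mp := Measure.measurePreserving_homeomorphUnitSphereProd (volume : Measure E)
  have e4 := mp.lintegral_comp (f := fun z : (sphere (0:E) 1 × Ioi (0:ℝ)) => h z.2.1)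
    (hhm.comp (measurable_subtype_coe.comp measurable_snd))
  have e5 : ∫⁻ z : (sphere (0:E) 1 × Ioi (0:ℝ)), h z.2.1
          ∂((volume : Measure E).toSphere.prod (Measure.volumeIoiPow (Module.finrank ℝ E - 1)))
      = (volume : Measure E).toSphere univ *
          ∫⁻ r : Ioi (0:ℝ), h r.1 ∂(Measure.volumeIoiPow (Module.finrank ℝ E - 1)) := by
    rw [lintegral_prod (fun z : (sphere (0:E) 1 × Ioi (0:ℝ)) => h z.2.1) ((hhm.comp (measurable_subtype_coe.comp measurable_snd)).aemeasurable)]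
    simp [lintegral_const]
    ring
  have e6 : ∫⁻ r : Ioi (0:ℝ), h r.1 ∂(Measure.volumeIoiPow (Module.finrank ℝ E - 1))
      = ∫⁻ r in Ioi (0:ℝ), (ENNReal.ofReal ((r:ℝ) ^ (N - 1 : ℕ)) * h r) ∂volume := by
    rw [dimE, Measure.volumeIoiPow,
      lintegral_withDensity_eq_lintegral_mul (Measure.comap Subtype.val volume)
        (f := fun r : Ioi (0:ℝ) => ENNReal.ofReal ((r:ℝ) ^ (N - 1 : ℕ)))
        ((measurable_subtype_coe.pow_const _).ennreal_ofReal)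
        (g := fun r : Ioi (0:ℝ) => h r.1)
        (hhm.comp measurable_subtype_coe)]
    have := setLIntegral_subtype (μ := (volume : Measure ℝ)) (measurableSet_Ioi (a := (0:ℝ))) univ
      (fun r : ℝ => ENNReal.ofReal (r ^ (N - 1 : ℕ)) * h r)
    rw [Measure.restrict_univ, image_univ, Subtype.range_coe] at this
    rw [← this]
    rfl
  have e7 : ∫⁻ r in Ioi (0:ℝ), (ENNReal.ofReal ((r:ℝ) ^ (N - 1 : ℕ)) * h r) ∂volume < ⊤ := by
    have hs : (-1 : ℝ) < (N - 1 : ℕ) - p := by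
      have : ((N - 1 : ℕ) : ℝ) = (N : ℝ) - 1 := by
        rw [Nat.cast_sub hN]; norm_num
      rw [this]; linarith
    have hint := integrableOn_rpow_mul_exp_neg_mul_sq (b := c⁻¹) (by positivity) hs
    have hfin := hint.2
    rw [HasFiniteIntegral] at hfin
    refine lt_of_le_of_lt ?_ hfin
    rw [← lintegral_indicator measurableSet_Ioi, ← lintegral_indicator measurableSet_Ioi]
    refine lintegral_mono fun r => ?_
    rcases le_or_gt r 0 with hr | hr
    · simp only [indicator, mem_Ioi, not_lt.mpr hr, if_neg (not_lt.mpr hr)]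
      exact le_rfl
    · rw [indicator_of_mem (mem_Ioi.mpr hr), indicator_of_mem (mem_Ioi.mpr hr), hh]
      have : ENNReal.ofReal (r ^ (N - 1 : ℕ)) * ENNReal.ofReal (r ^ (-p) * Real.exp (-r ^ 2 / c))
          = ENNReal.ofReal (r ^ ((N - 1 : ℕ) - p : ℝ) * Real.exp (-c⁻¹ * r ^ 2)) := by
        rw [← ENNReal.ofReal_mul (by positivity), ← mul_assoc]
        congr 1
        rw [← Real.rpow_natCast r (N - 1), ← Real.rpow_add hr, neg_div, neg_mul, inv_mul_eq_div]
        ring_nf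
      rw [this]
      exact Real.ofReal_le_enorm _
  have e2 : ∫⁻ x, h ‖x‖ ∂(volume : Measure E) = ∫⁻ x in ({0}ᶜ : Set E), h ‖x‖ ∂volume := by
    rw [MeasureTheory.restrict_compl_singleton]
  simp only [homeomorphUnitSphereProd_apply_snd_coe] at e4
  rw [e2, ← e3, e4, e5, e6]
  exact ENNReal.mul_lt_top (measure_lt_top _ _) e7


open MeasureTheory Real

/-- `α = (N−2)/2 − √(((N−2)/2)² + a)`. -/
noncomputable def alphaPar (N : ℕ) (a : ℝ) : ℝ :=
  ((N : ℝ) - 2) / 2 - Real.sqrt ((((N : ℝ) - 2) / 2) ^ 2 + a)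

theorem no_Linfty_bound_for_schrodinger
    (N : ℕ) (hN : 3 ≤ N) (a : ℝ) (ha : -((((N : ℝ) - 2) / 2) ^ 2) < a) (ha' : a < 0)
    (u : EuclideanSpace ℝ (Fin N) → ℝ → ℂ)
    (hu : ∀ (x : EuclideanSpace ℝ (Fin N)) (t : ℝ), u x t =
      (((1 + t ^ 2) ^ (-(N : ℝ) / 4 + alphaPar N a / 2) : ℝ) : ℂ) *
      ((‖x‖ ^ (-(alphaPar N a)) : ℝ) : ℂ) *
      ((Real.exp (-‖x‖ ^ 2 / (4 * (1 + t ^ 2))) : ℝ) : ℂ) *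
      Complex.exp (Complex.I * ((t * ‖x‖ ^ 2 / (4 * (1 + t ^ 2)) : ℝ) : ℂ)) *
      Complex.exp (-Complex.I * ((((N : ℝ) / 2 - alphaPar N a) * Real.arctan t : ℝ) : ℂ))) :
    0 < alphaPar N a ∧
    Integrable (fun x => u x 0) (volume : Measure (EuclideanSpace ℝ (Fin N))) ∧
    Integrable (fun x => ‖u x 0‖ ^ 2) (volume : Measure (EuclideanSpace ℝ (Fin N))) ∧
    ∀ t : ℝ, essSup (fun x => (‖u x t‖₊ : ENNReal))
      (volume : Measure (EuclideanSpace ℝ (Fin N))) = ⊤ := by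
  haveI : Nontrivial (EuclideanSpace ℝ (Fin N)) := by
    apply Module.nontrivial_of_finrank_pos (R := ℝ)
    rw [finrank_euclideanSpace_fin]; omega
  set α := alphaPar N a with hα
  have hN0 : 0 < N := by omega
  have hN3 : (3 : ℝ) ≤ (N : ℝ) := by exact_mod_cast hN
  set c : ℝ := ((N : ℝ) - 2) / 2 with hcdef
  have hc : 0 < c := by rw [hcdef]; linarith
  have hca : 0 < c ^ 2 + a := by rw [hcdef]; nlinarith
  have hsq : Real.sqrt (c ^ 2 + a) < c := by
    have h1 : Real.sqrt (c ^ 2 + a) < Real.sqrt (c ^ 2) :=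
      Real.sqrt_lt_sqrt hca.le (by linarith)
    rwa [Real.sqrt_sq hc.le] at h1
  have halpha : 0 < α := by
    rw [hα, alphaPar, ← hcdef]; linarith
  have halphac : α ≤ c := by
    rw [hα, alphaPar, ← hcdef]
    have := Real.sqrt_nonneg (c ^ 2 + a)
    linarith
  have hαN : α < (N : ℝ) := by rw [hcdef] at halphac; linarith
  have h2αN : 2 * α < (N : ℝ) := by rw [hcdef] at halphac; linarith
  -- norm of u
  have hnorm : ∀ (x : EuclideanSpace ℝ (Fin N)) (t : ℝ), ‖u x t‖ =
      (1 + t ^ 2) ^ (-(N : ℝ) / 4 + α / 2) *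
        (‖x‖ ^ (-α) * Real.exp (-‖x‖ ^ 2 / (4 * (1 + t ^ 2)))) := by
    intro x t
    rw [hu]
    rw [norm_mul, norm_mul, norm_mul, norm_mul]
    rw [Complex.norm_real, Complex.norm_real, Complex.norm_real]
    rw [Complex.norm_exp, Complex.norm_exp]
    have h1 : ∀ r : ℝ, (Complex.I * (r : ℂ)).re = 0 := fun r => by
      simp [Complex.mul_re]
    have h2 : ∀ r : ℝ, (-Complex.I * (r : ℂ)).re = 0 := fun r => by
      simp [Complex.mul_re]
    rw [h1 _, h2 _, Real.exp_zero]
    have ht : (0 : ℝ) < 1 + t ^ 2 := by positivity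
    rw [Real.norm_eq_abs, Real.norm_eq_abs, Real.norm_eq_abs,
      abs_of_pos (Real.rpow_pos_of_pos ht _),
      abs_of_nonneg (Real.rpow_nonneg (norm_nonneg x) _),
      abs_of_pos (Real.exp_pos _)]
    ring
  -- value at t = 0
  have h00 : ∀ x : EuclideanSpace ℝ (Fin N), u x 0 = (((‖x‖ ^ (-α) * Real.exp (-‖x‖ ^ 2 / 4) : ℝ)) : ℂ) := by
    intro x
    rw [hu]
    norm_num [Real.arctan_zero, Real.one_rpow]
  refine ⟨halpha, ?_, ?_, ?_⟩
  · -- integrability of u(·,0)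
    have hi := rpow_exp_integrable (N := N) hN0 (p := α) hαN (c := (4:ℝ)) (by norm_num)
    have := hi.ofReal (𝕜 := ℂ)
    refine this.congr ?_
    filter_upwards with x
    exact (h00 x).symm
  · -- square integrability
    have hi := rpow_exp_integrable (N := N) hN0 (p := 2 * α) h2αN (c := (2:ℝ)) (by norm_num)
    refine hi.congr ?_
    filter_upwards with x
    have hv : ‖u x 0‖ ^ 2 = ‖x‖ ^ (-(2 * α)) * Real.exp (-‖x‖ ^ 2 / 2) := by
      rw [h00 x, Complex.norm_real, Real.norm_eq_abs,
        abs_of_nonneg (by positivity : (0:ℝ) ≤ ‖x‖ ^ (-α) * Real.exp (-‖x‖ ^ 2 / 4)),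
        mul_pow]
      congr 1
      · rw [← Real.rpow_natCast (‖x‖ ^ (-α)) 2, ← Real.rpow_mul (norm_nonneg x)]
        push_cast
        ring_nf
      · rw [pow_two, ← Real.exp_add]
        congr 1
        ring
    exact hv.symm
  · -- essSup = ⊤
    intro t
    have ht : (0 : ℝ) < 1 + t ^ 2 := by positivity
    set A : ℝ := (1 + t ^ 2) ^ (-(N : ℝ) / 4 + α / 2) with hAdef
    have hA : 0 < A := Real.rpow_pos_of_pos ht _
    set D : ℝ := A * Real.exp (-(1/4)) with hDdef
    have hD : 0 < D := by positivity
    have hlow : ∀ x : EuclideanSpace ℝ (Fin N), x ≠ 0 → ‖x‖ ≤ 1 → D * ‖x‖ ^ (-α) ≤ ‖u x t‖ := by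
      intro x hx hx1
      rw [hnorm x t]
      have hx2 : ‖x‖ ^ 2 / (4 * (1 + t ^ 2)) ≤ 1 / 4 := by
        apply div_le_div₀ (by norm_num) (by nlinarith [norm_nonneg x]) (by norm_num)
        nlinarith
      have hexp : Real.exp (-(1/4)) ≤ Real.exp (-‖x‖ ^ 2 / (4 * (1 + t ^ 2))) := by
        apply Real.exp_le_exp.2
        rw [neg_div]
        linarith
      have hb : (0:ℝ) ≤ ‖x‖ ^ (-α) := Real.rpow_nonneg (norm_nonneg x) _
      calc D * ‖x‖ ^ (-α) = A * (‖x‖ ^ (-α) * Real.exp (-(1/4))) := by rw [hDdef]; ring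
        _ ≤ A * (‖x‖ ^ (-α) * Real.exp (-‖x‖ ^ 2 / (4 * (1 + t ^ 2)))) := by
            apply mul_le_mul_of_nonneg_left (mul_le_mul_of_nonneg_left hexp hb) hA.le
    rw [essSup_eq_sInf]
    refine sInf_eq_top.2 fun M hM => ?_
    by_contra hM'
    set m : ℝ := M.toReal with hmdef
    have hm : 0 ≤ m := ENNReal.toReal_nonneg
    set r0 : ℝ := (D / (m + 1)) ^ (1 / α) with hr0def
    have hr0 : 0 < r0 := Real.rpow_pos_of_pos (by positivity) _
    set r : ℝ := min 1 (r0 / 2) with hrdef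
    have hr : 0 < r := lt_min one_pos (by positivity)
    have hr1 : r ≤ 1 := min_le_left _ _
    have hrr0 : r ≤ r0 := (min_le_right _ _).trans (by linarith)
    have hr0val : D * r0 ^ (-α) = m + 1 := by
      rw [hr0def, ← Real.rpow_mul (by positivity : (0:ℝ) ≤ D / (m+1))]
      rw [show 1 / α * (-α) = -1 by field_simp]
      rw [Real.rpow_neg_one]
      field_simp
    have hincl : Metric.ball (0 : EuclideanSpace ℝ (Fin N)) r \ {0} ⊆ {x : EuclideanSpace ℝ (Fin N) | M < (‖u x t‖₊ : ENNReal)} := by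
      intro x hxmem
      obtain ⟨hxball, hx0⟩ := hxmem
      have hx0' : x ≠ 0 := hx0
      have hxn : ‖x‖ < r := by rwa [mem_ball_zero_iff] at hxball
      have hxpos : 0 < ‖x‖ := norm_pos_iff.2 hx0'
      have hmono : r ^ (-α) ≤ ‖x‖ ^ (-α) :=
        Real.rpow_le_rpow_of_nonpos hxpos hxn.le (by linarith)
      have hmono0 : r0 ^ (-α) ≤ r ^ (-α) :=
        Real.rpow_le_rpow_of_nonpos hr hrr0 (by linarith)
      have hval : m + 1 ≤ ‖u x t‖ := by
        calc m + 1 = D * r0 ^ (-α) := hr0val.symm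
          _ ≤ D * ‖x‖ ^ (-α) := by
              apply mul_le_mul_of_nonneg_left (hmono0.trans hmono) hD.le
          _ ≤ ‖u x t‖ := hlow x hx0' (by linarith)
      show M < ‖u x t‖ₑ
      rw [← ofReal_norm_eq_enorm]
      calc M = ENNReal.ofReal m := (ENNReal.ofReal_toReal hM').symm
        _ < ENNReal.ofReal (m + 1) := by
            rw [ENNReal.ofReal_lt_ofReal_iff (by linarith)]; linarith
        _ ≤ ENNReal.ofReal ‖u x t‖ := ENNReal.ofReal_le_ofReal hval
    have hpos : 0 < volume (Metric.ball (0 : EuclideanSpace ℝ (Fin N)) r \ {0}) := by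
      rw [measure_diff_null (measure_singleton _)]
      exact Metric.measure_ball_pos volume (0 : EuclideanSpace ℝ (Fin N)) hr
    have : volume (Metric.ball (0 : EuclideanSpace ℝ (Fin N)) r \ {0}) = 0 :=
      le_antisymm (hM ▸ measure_mono hincl) (zero_le)
    rw [this] at hpos
    exact lt_irrefl _ hpos
end

section
/- Let N ≥ 3 be an integer, a ∈ ℝ with a > −((N−2)/2)², α = (N−2)/2 − √(((N−2)/2)² + a), and n ∈ ℕ. Then V_n is an eigenfunction of the quantum harmonic oscillator with inverse-square potential: for every x ∈ ℝ^N with x ≠ 0, −Δ V_n(x) + a V_n(x)/|x|² + (|x|²/4) V_n(x) = (2n − α + N/2) V_n(x). -/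
open MeasureTheory Real

/-- `P_n(t) = Σ_{i=0}^n [(−n)_i / ((N/2 − α)_i)] · t^i / i!`. -/
noncomputable def PPol (N : ℕ) (a : ℝ) (n : ℕ) (t : ℝ) : ℝ :=
  ∑ i ∈ Finset.range (n + 1),
    ((ascPochhammer ℝ i).eval (-(n : ℝ)) / (ascPochhammer ℝ i).eval ((N : ℝ) / 2 - alphaPar N a))
      * t ^ i / (Nat.factorial i)

/-- `V_n(x) = |x|^(−α) e^(−|x|²/4) P_n(|x|²/2)`. -/
noncomputable def VFun (N : ℕ) (a : ℝ) (n : ℕ) (x : EuclideanSpace ℝ (Fin N)) : ℝ :=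
  ‖x‖ ^ (-(alphaPar N a)) * Real.exp (-‖x‖ ^ 2 / 4) * PPol N a n (‖x‖ ^ 2 / 2)

/-- The Laplacian: the sum of the second partial derivatives in the coordinate
directions. -/
noncomputable def laplacian {N : ℕ} {F : Type*} [NormedAddCommGroup F] [NormedSpace ℝ F]
    (f : EuclideanSpace ℝ (Fin N) → F) (x : EuclideanSpace ℝ (Fin N)) : F :=
  ∑ i : Fin N,
    fderiv ℝ (fun y => fderiv ℝ f y (EuclideanSpace.single i (1 : ℝ))) x
      (EuclideanSpace.single i (1 : ℝ))

/-! ### Auxiliary definitions and lemmas -/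

/-- The coefficient `c_i = (−n)_i / ((b)_i · i!)`. -/
noncomputable def cCoef (b : ℝ) (n : ℕ) (i : ℕ) : ℝ :=
  (ascPochhammer ℝ i).eval (-(n : ℝ)) / ((ascPochhammer ℝ i).eval b * (Nat.factorial i))

/-- The polynomial `P_n` as an element of `ℝ[X]`. -/
noncomputable def QPol (b : ℝ) (n : ℕ) : Polynomial ℝ :=
  ∑ i ∈ Finset.range (n + 1), Polynomial.C (cCoef b n i) * Polynomial.X ^ i

lemma pochB_pos (b : ℝ) (hb : 0 < b) (i : ℕ) : 0 < (ascPochhammer ℝ i).eval b := by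
  induction i with
  | zero => simp
  | succ k ih =>
    rw [ascPochhammer_succ_right]
    simp only [Polynomial.eval_mul, Polynomial.eval_add, Polynomial.eval_X,
      Polynomial.eval_natCast]
    positivity

lemma pochA_succ (n k : ℕ) :
    (ascPochhammer ℝ (k+1)).eval (-(n:ℝ)) = (ascPochhammer ℝ k).eval (-(n:ℝ)) * ((k:ℝ) - n) := by
  rw [ascPochhammer_succ_right]
  simp only [Polynomial.eval_mul, Polynomial.eval_add, Polynomial.eval_X, Polynomial.eval_natCast]
  ring

lemma cCoef_rec (b : ℝ) (hb : 0 < b) (n : ℕ) (i : ℕ) :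
    ((i:ℝ)+1) * (b + i) * cCoef b n (i+1) = ((i:ℝ) - n) * cCoef b n i := by
  have hB := (pochB_pos b hb i).ne'
  have hBi1 : (ascPochhammer ℝ (i+1)).eval b = (ascPochhammer ℝ i).eval b * (b + i) := by
    rw [ascPochhammer_succ_right]
    simp only [Polynomial.eval_mul, Polynomial.eval_add, Polynomial.eval_X,
      Polynomial.eval_natCast]
  have hbi : (b + (i:ℝ)) ≠ 0 := by positivity
  have hf : ((Nat.factorial i : ℝ)) ≠ 0 := Nat.cast_ne_zero.mpr (Nat.factorial_ne_zero i)
  unfold cCoef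
  rw [pochA_succ, hBi1, Nat.factorial_succ]
  push_cast
  field_simp

lemma pochA_vanish (n i : ℕ) (hi : n < i) : (ascPochhammer ℝ i).eval (-(n:ℝ)) = 0 := by
  obtain ⟨k, rfl⟩ := Nat.exists_eq_add_of_lt hi
  induction k with
  | zero => rw [pochA_succ]; simp
  | succ m ih =>
    have : n + (m + 1) + 1 = (n + m + 1) + 1 := by omega
    rw [this, pochA_succ, ih (by omega), zero_mul]

lemma cCoef_vanish (b : ℝ) (n : ℕ) (i : ℕ) (hi : n < i) : cCoef b n i = 0 := by
  unfold cCoef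
  rw [pochA_vanish n i hi, zero_div]

lemma QPol_coeff (b : ℝ) (n : ℕ) (i : ℕ) : (QPol b n).coeff i = cCoef b n i := by
  unfold QPol
  rw [Polynomial.finset_sum_coeff]
  simp only [Polynomial.coeff_C_mul, Polynomial.coeff_X_pow]
  rw [Finset.sum_eq_single i]
  · simp
  · intro j _ hj; simp [Ne.symm hj]
  · intro h
    simp only [Finset.mem_range, not_lt] at h
    simp [cCoef_vanish b n i (by omega)]

/-- Kummer's equation (confluent hypergeometric ODE) in polynomial form. -/
lemma kummer (b : ℝ) (hb : 0 < b) (n : ℕ) :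
    Polynomial.X * (Polynomial.derivative (Polynomial.derivative (QPol b n)))
      + (Polynomial.C b - Polynomial.X) * Polynomial.derivative (QPol b n)
      + Polynomial.C (n:ℝ) * QPol b n = 0 := by
  ext k
  simp only [Polynomial.coeff_add, Polynomial.coeff_zero, sub_mul, Polynomial.coeff_sub,
    Polynomial.coeff_C_mul]
  cases k with
  | zero =>
    simp only [Polynomial.mul_coeff_zero, Polynomial.coeff_X_zero, zero_mul,
      Polynomial.coeff_derivative, QPol_coeff]
    push_cast
    linear_combination cCoef_rec b hb n 0
  | succ k =>
    rw [Polynomial.coeff_X_mul, Polynomial.coeff_X_mul]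
    simp only [Polynomial.coeff_derivative, QPol_coeff]
    push_cast
    linear_combination (norm := (push_cast; ring1)) cCoef_rec b hb n (k+1)

lemma kummer_eval (b : ℝ) (hb : 0 < b) (n : ℕ) (t : ℝ) :
    t * (Polynomial.derivative (Polynomial.derivative (QPol b n))).eval t
      + (b - t) * (Polynomial.derivative (QPol b n)).eval t
      + n * (QPol b n).eval t = 0 := by
  have h := congrArg (Polynomial.eval t) (kummer b hb n)
  simpa using h

/-- The building block `r ↦ r^c e^{−r/4} p(r/2)`. -/
noncomputable def Hfun (c : ℝ) (p : Polynomial ℝ) (r : ℝ) : ℝ :=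
  r ^ c * Real.exp (-r / 4) * p.eval (r / 2)

/-- The polynomial appearing after differentiating `Hfun`. -/
noncomputable def shiftP (c : ℝ) (p : Polynomial ℝ) : Polynomial ℝ :=
  Polynomial.C c * p - Polynomial.C (2⁻¹ : ℝ) * (Polynomial.X * p)
    + Polynomial.X * Polynomial.derivative p

lemma hasDerivAt_Hfun (c : ℝ) (p : Polynomial ℝ) {r : ℝ} (hr : 0 < r) :
    HasDerivAt (Hfun c p) (Hfun (c - 1) (shiftP c p) r) r := by
  have h1 : HasDerivAt (fun s : ℝ => s ^ c) (c * r ^ (c - 1)) r :=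
    Real.hasDerivAt_rpow_const (Or.inl hr.ne')
  have h2 : HasDerivAt (fun s : ℝ => Real.exp (-s / 4)) (Real.exp (-r / 4) * (-1 / 4)) r := by
    have : HasDerivAt (fun s : ℝ => -s / 4) (-1 / 4) r := by
      simpa using ((hasDerivAt_id r).neg.div_const 4)
    exact this.exp
  have h3 : HasDerivAt (fun s : ℝ => p.eval (s / 2))
      ((Polynomial.derivative p).eval (r / 2) * (1 / 2)) r := by
    have hi : HasDerivAt (fun s : ℝ => s / 2) (1 / 2) r := by
      simpa using (hasDerivAt_id r).div_const 2
    simpa [Function.comp_def] using (p.hasDerivAt (r / 2)).comp r hi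
  have h := (h1.fun_mul h2).fun_mul h3
  refine h.congr_deriv ?_
  unfold Hfun shiftP
  have hrc : r ^ c = r ^ (c - 1) * r := by
    rw [← Real.rpow_add_one hr.ne']; ring_nf
  simp only [Polynomial.eval_add, Polynomial.eval_sub, Polynomial.eval_mul, Polynomial.eval_C,
    Polynomial.eval_X]
  rw [hrc]
  ring

/-- The ODE satisfied by `Hfun (−β) Q`. -/
lemma ode (β : ℝ) (n : ℕ) (Nr a : ℝ) (hab : a = 4*β^2 - 2*(Nr-2)*β)
    (hb : 0 < Nr/2 - 2*β) {r : ℝ} (hr : 0 < r) :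
    -(4*r * Hfun (-β-1-1) (shiftP (-β-1) (shiftP (-β) (QPol (Nr/2 - 2*β) n))) r
        + 2*Nr * Hfun (-β-1) (shiftP (-β) (QPol (Nr/2 - 2*β) n)) r)
      + a * Hfun (-β) (QPol (Nr/2 - 2*β) n) r / r
      + r/4 * Hfun (-β) (QPol (Nr/2 - 2*β) n) r
    = (2*(n:ℝ) - 2*β + Nr/2) * Hfun (-β) (QPol (Nr/2 - 2*β) n) r := by
  have hK := kummer_eval (Nr/2 - 2*β) hb n (r/2)
  set Q := QPol (Nr/2 - 2*β) n with hQ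
  unfold Hfun
  have e0 : r ^ (-β) = r ^ (-β-1-1) * r * r := by
    rw [← Real.rpow_add_one hr.ne', ← Real.rpow_add_one hr.ne']; ring_nf
  have e1 : r ^ (-β-1) = r ^ (-β-1-1) * r := by
    rw [← Real.rpow_add_one hr.ne']; ring_nf
  rw [e0, e1, hab]
  simp only [shiftP, Polynomial.derivative_add, Polynomial.derivative_sub,
    Polynomial.derivative_mul, Polynomial.derivative_C, Polynomial.derivative_X,
    Polynomial.eval_add, Polynomial.eval_sub, Polynomial.eval_mul, Polynomial.eval_C,
    Polynomial.eval_X, zero_mul, one_mul, zero_add, mul_one]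
  set u := r ^ (-β-1-1) with hu
  set E := Real.exp (-r/4) with hE
  set A := Polynomial.eval (r/2) Q with hA
  set B := Polynomial.eval (r/2) (Polynomial.derivative Q) with hB
  set Cc := Polynomial.eval (r/2) (Polynomial.derivative (Polynomial.derivative Q)) with hCc
  clear_value u E A B Cc
  have hdiv : (4*β^2 - 2*(Nr-2)*β) * (u * r * r * E * A) / r
      = (4*β^2 - 2*(Nr-2)*β) * (u * r * E * A) := by
    field_simp
  rw [hdiv]
  linear_combination (-2 * r^2 * u * E) * hK

/-! ### The Laplacian of a radial function -/

variable {N : ℕ}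

lemma normsq_eq_sum (y : EuclideanSpace ℝ (Fin N)) : ‖y‖ ^ 2 = ∑ i, y i ^ 2 := by
  rw [EuclideanSpace.norm_eq, Real.sq_sqrt]
  · simp [sq_abs]
  · positivity

/-- The differential of `y ↦ ‖y‖²`. -/
noncomputable def DQ (y : EuclideanSpace ℝ (Fin N)) : EuclideanSpace ℝ (Fin N) →L[ℝ] ℝ :=
  ∑ i, (2 * y i) • EuclideanSpace.proj (𝕜 := ℝ) i

lemma hasFDerivAt_normsq (y : EuclideanSpace ℝ (Fin N)) :
    HasFDerivAt (fun z : EuclideanSpace ℝ (Fin N) => ‖z‖ ^ 2) (DQ y) y := by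
  have : HasFDerivAt (fun z : EuclideanSpace ℝ (Fin N) => ∑ i, z i ^ 2) (DQ y) y := by
    apply HasFDerivAt.fun_sum
    intro i _
    have hp : HasFDerivAt (fun z : EuclideanSpace ℝ (Fin N) => z i)
        (EuclideanSpace.proj (𝕜 := ℝ) i) y := (EuclideanSpace.proj (𝕜 := ℝ) i).hasFDerivAt
    simpa [pow_two, two_mul, add_smul] using hp.fun_mul hp
  exact this.congr_of_eventuallyEq
    (Filter.Eventually.of_forall fun z => (normsq_eq_sum z))

lemma DQ_apply_single (y : EuclideanSpace ℝ (Fin N)) (i : Fin N) :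
    DQ y (EuclideanSpace.single i (1 : ℝ)) = 2 * y i := by
  unfold DQ
  rw [ContinuousLinearMap.sum_apply]
  simp only [ContinuousLinearMap.smul_apply, PiLp.proj_apply,
    EuclideanSpace.single_apply]
  rw [Finset.sum_eq_single i] <;> simp +contextual [eq_comm]

lemma laplacian_radial (g g1 g2 : ℝ → ℝ)
    (h1 : ∀ r : ℝ, 0 < r → HasDerivAt g (g1 r) r)
    (h2 : ∀ r : ℝ, 0 < r → HasDerivAt g1 (g2 r) r)
    {x : EuclideanSpace ℝ (Fin N)} (hx : x ≠ 0) :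
    laplacian (fun y => g (‖y‖ ^ 2)) x
      = 4 * ‖x‖ ^ 2 * g2 (‖x‖ ^ 2) + 2 * N * g1 (‖x‖ ^ 2) := by
  have hxn : ‖x‖ ≠ 0 := norm_ne_zero_iff.mpr hx
  have hxpos : (0:ℝ) < ‖x‖ ^ 2 := by positivity
  set f : EuclideanSpace ℝ (Fin N) → ℝ := fun y => g (‖y‖ ^ 2) with hf
  have hU : ∀ y : EuclideanSpace ℝ (Fin N), y ≠ 0 →
      fderiv ℝ f y = g1 (‖y‖ ^ 2) • DQ y := by
    intro y hy
    have hyp : (0:ℝ) < ‖y‖ ^ 2 := by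
      have : ‖y‖ ≠ 0 := norm_ne_zero_iff.mpr hy
      positivity
    have hF : HasFDerivAt f (g1 (‖y‖ ^ 2) • DQ y) y := by
      have := (h1 _ hyp).comp_hasFDerivAt y (hasFDerivAt_normsq y)
      simpa [Function.comp_def, hf] using this
    exact hF.fderiv
  have key : ∀ i : Fin N,
      fderiv ℝ (fun y => fderiv ℝ f y (EuclideanSpace.single i (1:ℝ))) x
        (EuclideanSpace.single i (1:ℝ))
      = 4 * (x i) ^ 2 * g2 (‖x‖ ^ 2) + 2 * g1 (‖x‖ ^ 2) := by
    intro i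
    have hev : (fun y => fderiv ℝ f y (EuclideanSpace.single i (1:ℝ)))
        =ᶠ[nhds x] (fun y => g1 (‖y‖ ^ 2) * (2 * y i)) := by
      filter_upwards [IsOpen.mem_nhds isOpen_compl_singleton hx] with y hy
      rw [hU y hy]
      simp [DQ_apply_single]
    rw [hev.fderiv_eq]
    have hc : HasFDerivAt (fun y : EuclideanSpace ℝ (Fin N) => g1 (‖y‖ ^ 2))
        (g2 (‖x‖ ^ 2) • DQ x) x := by
      have := (h2 _ hxpos).comp_hasFDerivAt x (hasFDerivAt_normsq x)
      simpa [Function.comp_def] using this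
    have hd : HasFDerivAt (fun y : EuclideanSpace ℝ (Fin N) => 2 * y i)
        ((2:ℝ) • (EuclideanSpace.proj (𝕜 := ℝ) i)) x :=
      ((EuclideanSpace.proj (𝕜 := ℝ) i).hasFDerivAt).const_mul 2
    rw [(hc.fun_mul hd).fderiv]
    simp only [ContinuousLinearMap.add_apply, ContinuousLinearMap.smul_apply,
      PiLp.proj_apply, DQ_apply_single, EuclideanSpace.single_apply, if_true, eq_self_iff_true,
      smul_eq_mul]
    ring
  unfold laplacian
  rw [Finset.sum_congr rfl (fun i _ => key i)]
  rw [Finset.sum_add_distrib, Finset.sum_const, ← Finset.sum_mul, ← Finset.mul_sum,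
    ← normsq_eq_sum]
  simp only [Finset.card_univ, Fintype.card_fin, nsmul_eq_mul]
  ring

lemma laplacian_congr {f g : EuclideanSpace ℝ (Fin N) → ℝ} {x : EuclideanSpace ℝ (Fin N)}
    (h : f =ᶠ[nhds x] g) : laplacian f x = laplacian g x := by
  unfold laplacian
  refine Finset.sum_congr rfl fun i _ => ?_
  have hf := Filter.EventuallyEq.fderiv (𝕜 := ℝ) h
  have h1 : (fun y => fderiv ℝ f y (EuclideanSpace.single i (1:ℝ)))
      =ᶠ[nhds x] (fun y => fderiv ℝ g y (EuclideanSpace.single i (1:ℝ))) :=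
    hf.mono (fun y hy => by simp only [hy])
  rw [h1.fderiv_eq]

/-! ### Relating `VFun` to `Hfun` -/

lemma PPol_eq_eval (N : ℕ) (a : ℝ) (n : ℕ) (t : ℝ) :
    PPol N a n t = (QPol ((N:ℝ)/2 - alphaPar N a) n).eval t := by
  unfold PPol QPol cCoef
  rw [Polynomial.eval_finset_sum]
  refine Finset.sum_congr rfl fun i _ => ?_
  simp only [Polynomial.eval_mul, Polynomial.eval_C, Polynomial.eval_pow, Polynomial.eval_X]
  simp only [div_eq_mul_inv, mul_inv]
  ring

lemma VFun_eq_Hfun (N : ℕ) (a : ℝ) (n : ℕ) (y : EuclideanSpace ℝ (Fin N)) :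
    VFun N a n y
      = Hfun (-(alphaPar N a / 2))
          (QPol ((N:ℝ)/2 - 2*(alphaPar N a / 2)) n) (‖y‖ ^ 2) := by
  unfold VFun Hfun
  have harg : (N:ℝ)/2 - 2*(alphaPar N a / 2) = (N:ℝ)/2 - alphaPar N a := by ring
  rw [harg, ← PPol_eq_eval]
  have hpow : ((‖y‖ ^ 2 : ℝ)) ^ (-(alphaPar N a / 2) : ℝ) = ‖y‖ ^ (-(alphaPar N a)) := by
    rw [← Real.rpow_natCast ‖y‖ 2, ← Real.rpow_mul (norm_nonneg y)]
    congr 1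
    push_cast
    ring
  rw [hpow]

theorem VFun_eigenfunction_harmonic_oscillator
    (N : ℕ) (hN : 3 ≤ N) (a : ℝ) (ha : a > -((((N : ℝ) - 2) / 2) ^ 2)) (n : ℕ) :
    ∀ (x : EuclideanSpace ℝ (Fin N)), x ≠ 0 →
      - laplacian (VFun N a n) x + a * VFun N a n x / ‖x‖ ^ 2 +
        (‖x‖ ^ 2 / 4) * VFun N a n x =
      (2 * (n : ℝ) - alphaPar N a + (N : ℝ) / 2) * VFun N a n x := by
  intro x hx
  set α := alphaPar N a with hα
  set β := α / 2 with hβ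
  have hca : (0:ℝ) < (((N:ℝ) - 2)/2) ^ 2 + a := by nlinarith [ha]
  have hs : Real.sqrt ((((N:ℝ) - 2)/2) ^ 2 + a) ^ 2 = (((N:ℝ) - 2)/2) ^ 2 + a :=
    Real.sq_sqrt hca.le
  have hspos : 0 < Real.sqrt ((((N:ℝ) - 2)/2) ^ 2 + a) := Real.sqrt_pos.mpr hca
  have hab : a = 4*β^2 - 2*((N:ℝ)-2)*β := by
    rw [hβ, hα]
    unfold alphaPar
    nlinarith [hs]
  have hb : 0 < (N:ℝ)/2 - 2*β := by
    rw [hβ, hα]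
    unfold alphaPar
    nlinarith [hspos]
  have hxn : ‖x‖ ≠ 0 := norm_ne_zero_iff.mpr hx
  have hxpos : (0:ℝ) < ‖x‖ ^ 2 := by positivity
  set Q := QPol ((N:ℝ)/2 - 2*β) n with hQ
  set G : ℝ → ℝ := Hfun (-β) Q with hG
  set G1 : ℝ → ℝ := Hfun (-β-1) (shiftP (-β) Q) with hG1
  set G2 : ℝ → ℝ := Hfun (-β-1-1) (shiftP (-β-1) (shiftP (-β) Q)) with hG2
  have h1 : ∀ r : ℝ, 0 < r → HasDerivAt G (G1 r) r := by
    intro r hr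
    have := hasDerivAt_Hfun (-β) Q hr
    convert this using 2 <;> ring
  have h2 : ∀ r : ℝ, 0 < r → HasDerivAt G1 (G2 r) r := by
    intro r hr
    have := hasDerivAt_Hfun (-β-1) (shiftP (-β) Q) hr
    convert this using 2 <;> ring
  have hVeq : ∀ y : EuclideanSpace ℝ (Fin N), VFun N a n y = G (‖y‖ ^ 2) := by
    intro y
    rw [hG, hQ, hβ, hα]
    exact VFun_eq_Hfun N a n y
  have hev : VFun N a n =ᶠ[nhds x] (fun y => G (‖y‖ ^ 2)) :=
    Filter.Eventually.of_forall hVeq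
  have hlap : laplacian (VFun N a n) x
      = 4 * ‖x‖ ^ 2 * G2 (‖x‖ ^ 2) + 2 * N * G1 (‖x‖ ^ 2) := by
    rw [laplacian_congr hev, laplacian_radial G G1 G2 h1 h2 hx]
  rw [hlap, hVeq x]
  have hode := ode β n (N:ℝ) a hab hb hxpos
  rw [hG, hG1, hG2, hQ]
  have hαβ : α = 2 * β := by rw [hβ]; ring
  rw [hαβ]
  linear_combination hode
end

section
/- Let N ≥ 3 be an integer, a ∈ ℝ with a > −((N−2)/2)², and α = (N−2)/2 − √(((N−2)/2)² + a). For all n, m ∈ ℕ with n ≠ m, the functions V_n and V_m are orthogonal in L²(ℝ^N): ∫_{ℝ^N} V_n(x) V_m(x) dx = 0. -/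
open MeasureTheory Real

section AuxOrtho

open Polynomial Finset

lemma fwdDiff_polyEval (p : ℝ[X]) :
    fwdDiff (1:ℝ) (fun x => p.eval x) = fun x => (p.comp (X + C 1) - p).eval x := by
  funext x; simp [fwdDiff, eval_comp]

lemma fwdDiff_iter_polyEval_eq_zero : ∀ (m : ℕ) (p : ℝ[X]), (p.natDegree < m ∨ p = 0) →
    (fwdDiff (1:ℝ))^[m] (fun x => p.eval x) = 0
  | 0, p, h => by
      rcases h with h | rfl
      · exact absurd h (Nat.not_lt_zero _)
      · funext x; simp
  | (m+1), p, h => by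
      rw [Function.iterate_succ_apply, fwdDiff_polyEval]
      apply fwdDiff_iter_polyEval_eq_zero m
      set q := p.comp (X + C 1) - p with hq_def
      by_cases hq : q = 0
      · right; exact hq
      left
      rcases h with h | rfl
      · have hp : p ≠ 0 := by
          rintro rfl; simp [hq_def] at hq
        have hcomp_lc : (p.comp (X + C 1)).leadingCoeff = p.leadingCoeff := by
          rw [leadingCoeff_comp (by rw [natDegree_X_add_C]; exact one_ne_zero),
            leadingCoeff_X_add_C, one_pow, mul_one]
        have hcomp_ne : p.comp (X + C 1) ≠ 0 := by
          intro h0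
          apply hp
          rwa [← leadingCoeff_eq_zero, ← hcomp_lc, leadingCoeff_eq_zero]
        have hnd : (p.comp (X + C 1)).natDegree = p.natDegree := by
          rw [natDegree_comp, natDegree_X_add_C, mul_one]
        have hdeg : (p.comp (X + C 1)).degree = p.degree := by
          rw [degree_eq_natDegree hcomp_ne, degree_eq_natDegree hp, hnd]
        have hlt : q.degree < p.degree := by
          have := degree_sub_lt hdeg hcomp_ne hcomp_lc
          rwa [hdeg] at this
        have : q.natDegree < p.natDegree := natDegree_lt_natDegree hq hlt
        omega
      · exfalso; apply hq; simp [hq_def]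

lemma alt_sum_zero (m : ℕ) (p : ℝ[X]) (hp : p.natDegree < m) :
    ∑ j ∈ range (m+1), (-1:ℝ)^j * (m.choose j) * p.eval (j:ℝ) = 0 := by
  have h0 : (fwdDiff (1:ℝ))^[m] (fun x => p.eval x) 0 = 0 := by
    rw [fwdDiff_iter_polyEval_eq_zero m p (Or.inl hp)]; rfl
  rw [fwdDiff_iter_eq_sum_shift] at h0
  have h1 : ∑ j ∈ range (m+1), ((-1:ℝ)^(m-j) * (m.choose j)) * p.eval (j:ℝ) = 0 := by
    rw [← h0]
    refine Finset.sum_congr rfl fun j hj => ?_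
    push_cast [zsmul_eq_mul]
    norm_num
  calc ∑ j ∈ range (m+1), (-1:ℝ)^j * (m.choose j) * p.eval (j:ℝ)
      = ∑ j ∈ range (m+1), (-1:ℝ)^m * (((-1:ℝ)^(m-j) * (m.choose j)) * p.eval (j:ℝ)) := by
        refine Finset.sum_congr rfl fun j hj => ?_
        have hjm : j ≤ m := by simpa using Nat.lt_succ_iff.mp (Finset.mem_range.mp hj)
        have hk : (-1:ℝ)^(m-j) * (-1:ℝ)^j = (-1:ℝ)^m := by
          rw [← pow_add, Nat.sub_add_cancel hjm]
        have hsq : (-1:ℝ)^j * (-1:ℝ)^j = 1 := by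
          rw [← pow_add, ← two_mul, pow_mul]; norm_num
        have hsq2 : (-1:ℝ)^(m-j) * (-1:ℝ)^(m-j) = 1 := by
          rw [← pow_add, ← two_mul, pow_mul]; norm_num
        linear_combination ((-1:ℝ)^(m-j) * (m.choose j) * p.eval (j:ℝ)) * hk -
          ((-1:ℝ)^j * (m.choose j) * p.eval (j:ℝ)) * hsq2
    _ = (-1:ℝ)^m * ∑ j ∈ range (m+1), ((-1:ℝ)^(m-j) * (m.choose j)) * p.eval (j:ℝ) := by
        rw [Finset.mul_sum]
    _ = 0 := by rw [h1, mul_zero]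

lemma Gamma_add_nat (x : ℝ) (hx : 0 < x) : ∀ k : ℕ,
    Real.Gamma (x + k) = Real.Gamma x * (ascPochhammer ℝ k).eval x
  | 0 => by simp
  | (k+1) => by
      have h1 : x + (k+1 : ℕ) = (x + k) + 1 := by push_cast; ring
      have h2 : x + (k:ℝ) ≠ 0 := by positivity
      rw [h1, Real.Gamma_add_one h2, Gamma_add_nat x hx k, ascPochhammer_succ_right]
      simp [eval_mul]
      ring

/-- coefficient of the Laguerre-type polynomial -/
noncomputable def lagC (β : ℝ) (k j : ℕ) : ℝ :=
  (ascPochhammer ℝ j).eval (-(k:ℝ)) / (ascPochhammer ℝ j).eval (1+β) / (j.factorial : ℝ)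

lemma core_sum (β : ℝ) (hβ : 0 ≤ β) (m i : ℕ) (him : i < m) :
    ∑ j ∈ range (m+1), lagC β m j * Real.Gamma (1 + β + i + j) = 0 := by
  have hβ1 : (0:ℝ) < 1 + β := by linarith
  set q : ℝ[X] := (ascPochhammer ℝ i).comp (C (1+β) + X) with hq_def
  have hqdeg : q.natDegree < m := by
    rw [hq_def, natDegree_comp, ascPochhammer_natDegree]
    have : (C (1+β) + X).natDegree = 1 := by
      rw [add_comm, natDegree_X_add_C]
    rw [this, mul_one]; exact him
  have key := alt_sum_zero m q hqdeg
  have hstep : ∀ j ∈ range (m+1),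
      lagC β m j * Real.Gamma (1 + β + i + j)
        = Real.Gamma (1+β) * ((-1:ℝ)^j * (m.choose j) * q.eval (j:ℝ)) := by
    intro j hj
    have hGij : Real.Gamma (1 + β + i + j)
        = Real.Gamma (1+β) * (ascPochhammer ℝ j).eval (1+β)
          * (ascPochhammer ℝ i).eval (1+β+j) := by
      have e1 : (1:ℝ) + β + i + j = (1 + β + j) + i := by push_cast; ring
      rw [e1, Gamma_add_nat _ (by positivity) i, Gamma_add_nat _ hβ1 j]
    have hposj : (0:ℝ) < (ascPochhammer ℝ j).eval (1+β) := ascPochhammer_pos j _ hβ1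
    have hneg : (ascPochhammer ℝ j).eval (-(m:ℝ))
        = (-1:ℝ)^j * ((j.factorial : ℝ) * (m.choose j)) := by
      rw [ascPochhammer_eval_neg_eq_descPochhammer]
      congr 1
      rw [descPochhammer_eval_eq_descFactorial]
      exact_mod_cast congrArg (Nat.cast : ℕ → ℝ) (Nat.descFactorial_eq_factorial_mul_choose m j)
    have hqj : q.eval (j:ℝ) = (ascPochhammer ℝ i).eval (1+β+j) := by
      rw [hq_def, eval_comp]; simp
    rw [hGij, hqj, lagC, hneg]
    have hfac : (j.factorial : ℝ) ≠ 0 := by positivity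
    field_simp
  rw [Finset.sum_congr rfl hstep, ← Finset.mul_sum, key, mul_zero]

lemma double_sum_lt (β : ℝ) (hβ : 0 ≤ β) (n m : ℕ) (hnm : n < m) :
    ∑ i ∈ range (n+1), ∑ j ∈ range (m+1),
      lagC β n i * lagC β m j * Real.Gamma (1 + β + i + j) = 0 := by
  refine Finset.sum_eq_zero fun i hi => ?_
  have him : i < m := by
    have := Finset.mem_range.mp hi; omega
  calc ∑ j ∈ range (m+1), lagC β n i * lagC β m j * Real.Gamma (1 + β + i + j)
      = lagC β n i * ∑ j ∈ range (m+1), lagC β m j * Real.Gamma (1 + β + i + j) := by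
        rw [Finset.mul_sum]; exact Finset.sum_congr rfl fun j hj => by ring
    _ = 0 := by rw [core_sum β hβ m i him, mul_zero]

lemma double_sum (β : ℝ) (hβ : 0 ≤ β) (n m : ℕ) (hnm : n ≠ m) :
    ∑ i ∈ range (n+1), ∑ j ∈ range (m+1),
      lagC β n i * lagC β m j * Real.Gamma (1 + β + i + j) = 0 := by
  rcases Nat.lt_or_ge n m with h | h
  · exact double_sum_lt β hβ n m h
  · have hmn : m < n := lt_of_le_of_ne h (Ne.symm hnm)
    rw [Finset.sum_comm]
    rw [← double_sum_lt β hβ m n hmn]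
    refine Finset.sum_congr rfl fun j hj => Finset.sum_congr rfl fun i hi => ?_
    have : (1:ℝ) + β + i + j = 1 + β + j + i := by ring
    rw [this]; ring

open MeasureTheory Real Finset

lemma moment (s : ℝ) (hs : -1 < s) :
    ∫ y in Set.Ioi (0:ℝ), y ^ s * Real.exp (-(2⁻¹) * y^2)
      = (2:ℝ) ^ ((s+1)/2 - 1) * Real.Gamma ((s+1)/2) := by
  have h := integral_rpow_mul_exp_neg_mul_rpow (p := 2) (q := s) (b := 2⁻¹)
    (by norm_num) hs (by norm_num)
  have heq : ∀ y ∈ Set.Ioi (0:ℝ),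
      y ^ s * Real.exp (-(2⁻¹) * y^2) = y ^ s * Real.exp (-2⁻¹ * y ^ (2:ℝ)) := by
    intro y hy
    rw [show (2:ℝ) = ((2:ℕ):ℝ) by norm_num, Real.rpow_natCast]
  rw [setIntegral_congr_fun measurableSet_Ioi heq, h]
  have h2 : (2⁻¹:ℝ) ^ (-(s+1)/2) = (2:ℝ)^((s+1)/2) := by
    rw [Real.inv_rpow (by norm_num : (0:ℝ) ≤ 2),
      ← Real.rpow_neg (by norm_num : (0:ℝ) ≤ 2)]
    congr 1; ring
  rw [h2, Real.rpow_sub (by norm_num : (0:ℝ) < 2), Real.rpow_one]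
  ring

end AuxOrtho

theorem VFun_orthogonal
    (N : ℕ) (hN : 3 ≤ N) (a : ℝ) (ha : a > -((((N : ℝ) - 2) / 2) ^ 2))
    (n m : ℕ) (hnm : n ≠ m) :
    ∫ x : EuclideanSpace ℝ (Fin N), VFun N a n x * VFun N a m x = 0 := by
  classical
  set β := Real.sqrt ((((N:ℝ)-2)/2)^2 + a) with hβ_def
  have hβ : 0 ≤ β := Real.sqrt_nonneg _
  set α := alphaPar N a with hα_def
  have hα' : α = ((N:ℝ)-2)/2 - β := by rw [hα_def, alphaPar, hβ_def]
  have hNα : (N:ℝ)/2 - α = 1 + β := by rw [hα']; ring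
  have hP : ∀ (k : ℕ) (t : ℝ), PPol N a k t = ∑ i ∈ Finset.range (k+1), lagC β k i * t^i := by
    intro k t
    rw [PPol]
    refine Finset.sum_congr rfl fun i _ => ?_
    rw [hNα, lagC]
    ring
  haveI : Nonempty (Fin N) := ⟨⟨0, by omega⟩⟩
  haveI : Nontrivial (EuclideanSpace ℝ (Fin N)) := inferInstance
  set g : ℝ → ℝ := fun r =>
    (r ^ (-α) * Real.exp (-r^2/4) * PPol N a n (r^2/2)) *
    (r ^ (-α) * Real.exp (-r^2/4) * PPol N a m (r^2/2)) with hg_def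
  have h1 : (fun x : EuclideanSpace ℝ (Fin N) => VFun N a n x * VFun N a m x)
      = fun x => g ‖x‖ := by
    funext x; rw [hg_def]; rfl
  rw [h1, MeasureTheory.integral_fun_norm_addHaar volume g]
  have hdim : Module.finrank ℝ (EuclideanSpace ℝ (Fin N)) = N := finrank_euclideanSpace_fin
  rw [hdim]
  suffices hI : ∫ y in Set.Ioi (0:ℝ), y ^ (N - 1) • g y = 0 by rw [hI, smul_zero, smul_zero]
  set D : ℕ → ℕ → ℝ := fun i j => lagC β n i * lagC β m j * (2⁻¹:ℝ)^(i+j) with hD_def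
  set ex : ℕ → ℕ → ℝ := fun i j => 1 + 2*β + 2*(i:ℝ) + 2*(j:ℝ) with hex_def
  have hterm : ∀ y ∈ Set.Ioi (0:ℝ), ∀ i j : ℕ,
      (y:ℝ)^(N-1) * ((y ^ (-α) * Real.exp (-y^2/4) * (lagC β n i * (y^2/2)^i)) *
        (y ^ (-α) * Real.exp (-y^2/4) * (lagC β m j * (y^2/2)^j)))
      = D i j * (y ^ (ex i j) * Real.exp (-(2⁻¹) * y^2)) := by
    intro y hy i j
    have hy0 : (0:ℝ) < y := hy
    have hE : Real.exp (-y^2/4) * Real.exp (-y^2/4) = Real.exp (-(2⁻¹) * y^2) := by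
      rw [← Real.exp_add]; ring_nf
    have hp2 : ∀ k : ℕ, ((y^2/2)^k : ℝ) = (2⁻¹)^k * y^(2*k) := by
      intro k; rw [div_pow, pow_mul, inv_pow, div_eq_inv_mul]
    have hcoll : y ^ (N-1 : ℕ) * (y ^ (-α) * y ^ (-α)) * (y ^ (2*i) * y ^ (2*j))
        = y ^ (ex i j) := by
      rw [← Real.rpow_natCast y (N-1), ← Real.rpow_natCast y (2*i),
        ← Real.rpow_natCast y (2*j)]
      simp only [← Real.rpow_add hy0]
      congr 1
      have h1 : ((N-1:ℕ):ℝ) = (N:ℝ) - 1 := by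
        push_cast [Nat.cast_sub (by omega : 1 ≤ N)]; ring
      rw [h1, hex_def, hα']
      push_cast
      ring
    calc (y:ℝ)^(N-1) * ((y ^ (-α) * Real.exp (-y^2/4) * (lagC β n i * (y^2/2)^i)) *
          (y ^ (-α) * Real.exp (-y^2/4) * (lagC β m j * (y^2/2)^j)))
        = (lagC β n i * lagC β m j * ((2⁻¹:ℝ)^i * (2⁻¹)^j)) *
            ((y ^ (N-1 : ℕ) * (y ^ (-α) * y ^ (-α)) * (y ^ (2*i) * y ^ (2*j))) *
              (Real.exp (-y^2/4) * Real.exp (-y^2/4))) := by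
          rw [hp2 i, hp2 j]; ring
      _ = D i j * (y ^ (ex i j) * Real.exp (-(2⁻¹) * y^2)) := by
          rw [hcoll, hE, hD_def]
          ring
  have hpt : ∀ y ∈ Set.Ioi (0:ℝ), y ^ (N-1) • g y
      = ∑ i ∈ Finset.range (n+1), ∑ j ∈ Finset.range (m+1),
          D i j * (y ^ (ex i j) * Real.exp (-(2⁻¹) * y^2)) := by
    intro y hy
    rw [smul_eq_mul, hg_def]
    simp only [hP, Finset.mul_sum, Finset.sum_mul]
    rw [Finset.sum_comm]
    refine Finset.sum_congr rfl fun j hj => Finset.sum_congr rfl fun i hi => ?_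
    exact hterm y hy j i
  have hs : ∀ i j : ℕ, (-1:ℝ) < ex i j := by
    intro i j
    rw [hex_def]
    have h1 : (0:ℝ) ≤ (i:ℝ) := Nat.cast_nonneg i
    have h2 : (0:ℝ) ≤ (j:ℝ) := Nat.cast_nonneg j
    dsimp only
    linarith
  have hInt : ∀ i j : ℕ, IntegrableOn
      (fun y : ℝ => D i j * (y ^ (ex i j) * Real.exp (-(2⁻¹) * y^2))) (Set.Ioi 0) := by
    intro i j
    have := integrableOn_rpow_mul_exp_neg_mul_sq (b := 2⁻¹) (by norm_num) (hs i j)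
    exact this.const_mul _
  have hpow : ∀ k : ℕ, (2⁻¹:ℝ)^k * (2:ℝ)^(β+(k:ℝ)) = (2:ℝ)^β := by
    intro k
    rw [inv_pow, ← Real.rpow_natCast (2:ℝ) k, ← Real.rpow_neg (by norm_num : (0:ℝ) ≤ 2),
      ← Real.rpow_add (by norm_num : (0:ℝ) < 2)]
    congr 1; ring
  have hval : ∀ i j : ℕ,
      ∫ y in Set.Ioi (0:ℝ), D i j * (y ^ (ex i j) * Real.exp (-(2⁻¹) * y^2))
        = (2:ℝ)^β * (lagC β n i * lagC β m j * Real.Gamma (1 + β + i + j)) := by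
    intro i j
    rw [MeasureTheory.integral_const_mul, moment (ex i j) (hs i j)]
    have he1 : (ex i j + 1)/2 = 1 + β + i + j := by rw [hex_def]; dsimp only; ring
    have he2 : (1:ℝ) + β + ↑i + ↑j - 1 = β + ((i+j : ℕ):ℝ) := by push_cast; ring
    rw [he1, he2]
    simp only [hD_def]
    linear_combination (lagC β n i * lagC β m j * Real.Gamma (1 + β + ↑i + ↑j)) * hpow (i+j)
  calc ∫ y in Set.Ioi (0:ℝ), y ^ (N-1) • g y
      = ∫ y in Set.Ioi (0:ℝ), ∑ i ∈ Finset.range (n+1), ∑ j ∈ Finset.range (m+1),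
          D i j * (y ^ (ex i j) * Real.exp (-(2⁻¹) * y^2)) :=
        setIntegral_congr_fun measurableSet_Ioi hpt
    _ = ∑ i ∈ Finset.range (n+1), ∑ j ∈ Finset.range (m+1),
          ∫ y in Set.Ioi (0:ℝ), D i j * (y ^ (ex i j) * Real.exp (-(2⁻¹) * y^2)) := by
        rw [MeasureTheory.integral_finset_sum _ (fun i _ =>
          integrable_finset_sum _ (fun j _ => hInt i j))]
        exact Finset.sum_congr rfl fun i _ =>
          MeasureTheory.integral_finset_sum _ (fun j _ => hInt i j)
    _ = ∑ i ∈ Finset.range (n+1), ∑ j ∈ Finset.range (m+1),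
          (2:ℝ)^β * (lagC β n i * lagC β m j * Real.Gamma (1 + β + i + j)) :=
        Finset.sum_congr rfl fun i _ => Finset.sum_congr rfl fun j _ => hval i j
    _ = (2:ℝ)^β * ∑ i ∈ Finset.range (n+1), ∑ j ∈ Finset.range (m+1),
          lagC β n i * lagC β m j * Real.Gamma (1 + β + i + j) := by
        rw [Finset.mul_sum]
        exact Finset.sum_congr rfl fun i _ => (Finset.mul_sum _ _ _).symm
    _ = 0 := by rw [double_sum β hβ n m hnm, mul_zero]
end

section
/- Let N ≥ 3 be an integer, a ∈ ℝ with a > −((N−2)/2)², α = (N−2)/2 − √(((N−2)/2)² + a), and n ∈ ℕ. Let u(x,t) = (1+t²)^(−N/4+α/2) · |x|^(−α) · exp(−|x|²/(4(1+t²))) · exp(i t |x|²/(4(1+t²))) · exp(−i (2n − α + N/2) arctan t) · P_n(|x|²/(2(1+t²))). Then the L² norm of u is conserved in time: for every t ∈ ℝ, ∫_{ℝ^N} |u(x,t)|² dx = ∫_{ℝ^N} |V_n(x)|² dx. -/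
open MeasureTheory Real

lemma measurable_VFun (N : ℕ) (a : ℝ) (n : ℕ) : Measurable (VFun N a n) := by
  unfold VFun PPol
  fun_prop

lemma sqrt_pow_eq (s : ℝ) (hs : 0 < s) (N : ℕ) :
    (Real.sqrt s) ^ N = s ^ ((N : ℝ) / 2) := by
  rw [Real.sqrt_eq_rpow, ← Real.rpow_natCast (s ^ (1/2 : ℝ)) N, ← Real.rpow_mul hs.le]
  ring_nf

lemma key_pointwise (N : ℕ) (a : ℝ) (n : ℕ) (t : ℝ) (x : EuclideanSpace ℝ (Fin N))
    (hx : x ≠ 0) :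
    ((1 + t ^ 2) ^ (-(N : ℝ) / 4 + alphaPar N a / 2) * ‖x‖ ^ (-(alphaPar N a)) *
      Real.exp (-‖x‖ ^ 2 / (4 * (1 + t ^ 2))) * PPol N a n (‖x‖ ^ 2 / (2 * (1 + t ^ 2)))) ^ 2
    = ((Real.sqrt (1 + t ^ 2)) ^ N)⁻¹ *
      (VFun N a n ((Real.sqrt (1 + t ^ 2))⁻¹ • x)) ^ 2 := by
  set α := alphaPar N a with hα
  have hs : (0:ℝ) < 1 + t ^ 2 := by positivity
  set s : ℝ := 1 + t ^ 2 with hsdef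
  have hc : (0:ℝ) < Real.sqrt s := Real.sqrt_pos.2 hs
  set c : ℝ := Real.sqrt s with hcdef
  have hc2 : c ^ 2 = s := Real.sq_sqrt hs.le
  have hxn : (0:ℝ) < ‖x‖ := norm_pos_iff.2 hx
  have hnorm : ‖(c⁻¹ • x : EuclideanSpace ℝ (Fin N))‖ = c⁻¹ * ‖x‖ := by
    rw [norm_smul, Real.norm_eq_abs, abs_of_pos (inv_pos.2 hc)]
  have hsq : (c⁻¹ * ‖x‖) ^ 2 = ‖x‖ ^ 2 / s := by
    rw [mul_pow, ← hc2]; field_simp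
  have hrpow : (c⁻¹ * ‖x‖) ^ (-α) = c ^ α * ‖x‖ ^ (-α) := by
    rw [Real.mul_rpow (inv_nonneg.2 hc.le) hxn.le, Real.inv_rpow hc.le,
      Real.rpow_neg hc.le, inv_inv]
  have hV : VFun N a n (c⁻¹ • x)
      = c ^ α * ‖x‖ ^ (-α) * Real.exp (-‖x‖ ^ 2 / (4 * s)) *
        PPol N a n (‖x‖ ^ 2 / (2 * s)) := by
    rw [VFun, hnorm, hsq, hrpow]
    have h1 : -(‖x‖ ^ 2 / s) / 4 = -‖x‖ ^ 2 / (4 * s) := by field_simp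
    have h2 : ‖x‖ ^ 2 / s / 2 = ‖x‖ ^ 2 / (2 * s) := by field_simp
    rw [h1, h2]
  rw [hV]
  have hcN : c ^ N = s ^ ((N : ℝ) / 2) := sqrt_pow_eq s hs N
  have hcα : (c ^ α) ^ 2 = s ^ α := by
    rw [hcdef, Real.sqrt_eq_rpow, ← Real.rpow_natCast (_ ^ (α : ℝ)) 2,
      ← Real.rpow_mul hs.le, ← Real.rpow_mul hs.le]
    congr 1
    ring
  have hA : (s ^ (-(N : ℝ) / 4 + α / 2)) ^ 2 = (c ^ N)⁻¹ * (c ^ α) ^ 2 := by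
    rw [hcN, hcα, ← Real.rpow_neg hs.le, ← Real.rpow_add hs,
      ← Real.rpow_natCast (s ^ (-(N : ℝ) / 4 + α / 2)) 2, ← Real.rpow_mul hs.le]
    ring_nf
  calc (s ^ (-(N : ℝ) / 4 + α / 2) * ‖x‖ ^ (-α) *
      Real.exp (-‖x‖ ^ 2 / (4 * s)) * PPol N a n (‖x‖ ^ 2 / (2 * s))) ^ 2
      = (s ^ (-(N : ℝ) / 4 + α / 2)) ^ 2 * (‖x‖ ^ (-α) *
        Real.exp (-‖x‖ ^ 2 / (4 * s)) * PPol N a n (‖x‖ ^ 2 / (2 * s))) ^ 2 := by ring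
    _ = (c ^ N)⁻¹ * (c ^ α * ‖x‖ ^ (-α) * Real.exp (-‖x‖ ^ 2 / (4 * s)) *
        PPol N a n (‖x‖ ^ 2 / (2 * s))) ^ 2 := by rw [hA]; ring

theorem L2_norm_conservation
    (N : ℕ) (hN : 3 ≤ N) (a : ℝ) (ha : a > -((((N : ℝ) - 2) / 2) ^ 2)) (n : ℕ)
    (u : EuclideanSpace ℝ (Fin N) → ℝ → ℂ)
    (hu : ∀ (x : EuclideanSpace ℝ (Fin N)) (t : ℝ), u x t =
      (((1 + t ^ 2) ^ (-(N : ℝ) / 4 + alphaPar N a / 2) : ℝ) : ℂ) *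
      ((‖x‖ ^ (-(alphaPar N a)) : ℝ) : ℂ) *
      ((Real.exp (-‖x‖ ^ 2 / (4 * (1 + t ^ 2))) : ℝ) : ℂ) *
      Complex.exp (Complex.I * ((t * ‖x‖ ^ 2 / (4 * (1 + t ^ 2)) : ℝ) : ℂ)) *
      Complex.exp (-Complex.I *
        (((2 * (n : ℝ) - alphaPar N a + (N : ℝ) / 2) * Real.arctan t : ℝ) : ℂ)) *
      ((PPol N a n (‖x‖ ^ 2 / (2 * (1 + t ^ 2))) : ℝ) : ℂ)) :
    ∀ t : ℝ,
      (∫⁻ x, (‖u x t‖₊ : ENNReal) ^ 2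
          ∂(volume : Measure (EuclideanSpace ℝ (Fin N)))) =
      ∫⁻ x, (‖VFun N a n x‖₊ : ENNReal) ^ 2
          ∂(volume : Measure (EuclideanSpace ℝ (Fin N))) := by
  intro t
  have hNpos : 0 < N := by omega
  haveI : Nontrivial (EuclideanSpace ℝ (Fin N)) := by
    refine ⟨⟨EuclideanSpace.single ⟨0, hNpos⟩ (1 : ℝ), 0, fun h => ?_⟩⟩
    have h2 := congrArg (fun v : EuclideanSpace ℝ (Fin N) => v ⟨0, hNpos⟩) h
    simp [EuclideanSpace.single] at h2
  have hs : (0:ℝ) < 1 + t ^ 2 := by positivity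
  set c : ℝ := Real.sqrt (1 + t ^ 2) with hcdef
  have hc : (0:ℝ) < c := Real.sqrt_pos.2 hs
  have hcinv : c⁻¹ ≠ 0 := inv_ne_zero hc.ne'
  have hmeasV : Measurable fun y : EuclideanSpace ℝ (Fin N) =>
      ENNReal.ofReal ((VFun N a n y) ^ 2) :=
    ((measurable_VFun N a n).pow_const 2).ennreal_ofReal
  have h0 : ∀ᵐ x : EuclideanSpace ℝ (Fin N) ∂volume, x ≠ 0 := by
    refine (MeasureTheory.ae_iff).2 ?_
    have : {x : EuclideanSpace ℝ (Fin N) | ¬ x ≠ 0} = {0} := by ext y; simp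
    rw [this]
    exact measure_singleton 0
  have hpt : ∀ᵐ x : EuclideanSpace ℝ (Fin N) ∂volume,
      (‖u x t‖₊ : ENNReal) ^ 2 =
      ENNReal.ofReal ((c ^ N)⁻¹) * ENNReal.ofReal ((VFun N a n (c⁻¹ • x)) ^ 2) := by
    filter_upwards [h0] with x hx
    have hgen : ∀ r : ℝ, ‖Complex.exp (Complex.I * (r : ℂ))‖ = 1 := fun r => by
      rw [Complex.norm_exp]
      simp only [Complex.mul_re, Complex.I_re, Complex.I_im, Complex.ofReal_re,
        Complex.ofReal_im]
      norm_num
    have hgen2 : ∀ r : ℝ, ‖Complex.exp (-Complex.I * (r : ℂ))‖ = 1 := fun r => by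
      rw [Complex.norm_exp]
      simp only [Complex.mul_re, Complex.neg_re, Complex.neg_im, Complex.I_re, Complex.I_im,
        Complex.ofReal_re, Complex.ofReal_im]
      norm_num
    have he1 := hgen (t * ‖x‖ ^ 2 / (4 * (1 + t ^ 2)))
    have he2 := hgen2 ((2 * (n : ℝ) - alphaPar N a + (N : ℝ) / 2) * Real.arctan t)
    have hn2 : ‖u x t‖ ^ 2 =
        ((1 + t ^ 2) ^ (-(N : ℝ) / 4 + alphaPar N a / 2) * ‖x‖ ^ (-(alphaPar N a)) *
          Real.exp (-‖x‖ ^ 2 / (4 * (1 + t ^ 2))) *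
          PPol N a n (‖x‖ ^ 2 / (2 * (1 + t ^ 2)))) ^ 2 := by
      rw [hu]
      simp only [norm_mul, Complex.norm_real, he1, he2, mul_one, Real.norm_eq_abs]
      rw [mul_pow, mul_pow, mul_pow, mul_pow, mul_pow, mul_pow]
      simp [sq_abs]
    have hkey := key_pointwise N a n t x hx
    rw [← enorm_eq_nnnorm, ← ofReal_norm, ← ENNReal.ofReal_pow (norm_nonneg _), hn2, hkey,
      ENNReal.ofReal_mul (by positivity)]
  rw [lintegral_congr_ae hpt,
    lintegral_const_mul' _ _ ENNReal.ofReal_ne_top]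
  have hmap := MeasureTheory.Measure.map_addHaar_smul
    (volume : Measure (EuclideanSpace ℝ (Fin N))) hcinv
  have hrank : Module.finrank ℝ (EuclideanSpace ℝ (Fin N)) = N := finrank_euclideanSpace_fin
  have habs : |((c⁻¹) ^ Module.finrank ℝ (EuclideanSpace ℝ (Fin N)))⁻¹| = c ^ N := by
    rw [hrank, inv_pow, inv_inv, abs_of_pos (pow_pos hc N)]
  have hint : (∫⁻ x, ENNReal.ofReal ((VFun N a n (c⁻¹ • x)) ^ 2)
      ∂(volume : Measure (EuclideanSpace ℝ (Fin N)))) =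
      ENNReal.ofReal (c ^ N) *
      ∫⁻ y, ENNReal.ofReal ((VFun N a n y) ^ 2)
        ∂(volume : Measure (EuclideanSpace ℝ (Fin N))) := by
    rw [← MeasureTheory.lintegral_map hmeasV (measurable_const_smul c⁻¹), hmap,
      MeasureTheory.lintegral_smul_measure, habs, smul_eq_mul]
  rw [hint, ← mul_assoc, ← ENNReal.ofReal_mul (by positivity),
    inv_mul_cancel₀ (pow_pos hc N).ne', ENNReal.ofReal_one, one_mul]
  refine lintegral_congr fun x => ?_
  rw [← enorm_eq_nnnorm, ← ofReal_norm, ← ENNReal.ofReal_pow (norm_nonneg _),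
    Real.norm_eq_abs, sq_abs]
end

section
/- Let N ≥ 3 be an integer, a ∈ ℝ with a > −((N−2)/2)², and α = (N−2)/2 − √(((N−2)/2)² + a). Define v : (ℝ^N ∖ {0}) × (0,∞) → ℝ by v(x,t) = t^(−N/2+α) · |x|^(−α) · e^(−|x|²/(4t)). Then v is a self-similar solution of the heat equation with inverse-square potential: for every x ∈ ℝ^N with x ≠ 0 and every t > 0, ∂_t v(x,t) = Δ_x v(x,t) − a v(x,t)/|x|². -/
open MeasureTheory Real

theorem selfsimilar_heat_solution
    (N : ℕ) (hN : 3 ≤ N) (a : ℝ) (ha : a > -((((N : ℝ) - 2) / 2) ^ 2))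
    (v : EuclideanSpace ℝ (Fin N) → ℝ → ℝ)
    (hv : ∀ (x : EuclideanSpace ℝ (Fin N)) (t : ℝ), v x t =
      t ^ (-(N : ℝ) / 2 + alphaPar N a) * ‖x‖ ^ (-(alphaPar N a)) *
        Real.exp (-‖x‖ ^ 2 / (4 * t))) :
    ∀ (x : EuclideanSpace ℝ (Fin N)), x ≠ 0 → ∀ t : ℝ, 0 < t →
      deriv (fun τ => v x τ) t =
        laplacian (fun y => v y t) x - a * v x t / ‖x‖ ^ 2 := by
  intro x hx t ht
  have ht' : t ≠ 0 := ne_of_gt ht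
  set α : ℝ := alphaPar N a with hαdef
  have hα : α ^ 2 - ((N : ℝ) - 2) * α = a := by
    have h1 : (0:ℝ) ≤ (((N : ℝ) - 2) / 2) ^ 2 + a := by nlinarith [ha]
    have h2 := Real.sq_sqrt h1
    rw [hαdef]; unfold alphaPar; nlinarith [h2]
  set p : ℝ := -α / 2 with hp
  set q : ℝ := -(N : ℝ) / 2 + α with hq
  set s : ℝ := ‖x‖ ^ 2 with hs
  have hx0 : ‖x‖ ≠ 0 := norm_ne_zero_iff.mpr hx
  have hs0 : 0 < s := by rw [hs]; positivity
  set c : ℝ := t ^ q with hc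
  set E : ℝ → ℝ := fun r => Real.exp (-r / (4 * t)) with hE
  -- derivative of E
  have hEd : ∀ r : ℝ, HasDerivAt E (E r * (-(1 / (4 * t)))) r := by
    intro r
    have h0 : HasDerivAt (fun u : ℝ => (-(1 / (4 * t))) * u) (-(1 / (4 * t))) r := by
      simpa using (hasDerivAt_id r).const_mul (-(1 / (4 * t)))
    have heq : (fun u : ℝ => (-(1 / (4 * t))) * u) = fun u : ℝ => -u / (4 * t) := by
      funext u; ring
    rw [heq] at h0
    have := h0.exp
    simpa [hE] using this
  set g1 : ℝ → ℝ := fun r => c * (p * r ^ (p - 1) - r ^ p / (4 * t)) * E r with hg1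
  set g2 : ℝ → ℝ := fun r =>
    c * (p * (p - 1) * r ^ (p - 2) - 2 * p / (4 * t) * r ^ (p - 1) + r ^ p / (16 * t ^ 2)) * E r
    with hg2
  have hg0d : ∀ r : ℝ, 0 < r → HasDerivAt (fun u : ℝ => c * u ^ p * E u) (g1 r) r := by
    intro r hr
    have h1 : HasDerivAt (fun u : ℝ => u ^ p) (p * r ^ (p - 1)) r :=
      Real.hasDerivAt_rpow_const (Or.inl hr.ne')
    have h2 := (h1.const_mul c).fun_mul (hEd r)
    refine h2.congr_deriv ?_
    simp only [hg1]; ring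
  have hg1d : ∀ r : ℝ, 0 < r → HasDerivAt g1 (g2 r) r := by
    intro r hr
    have h1 : HasDerivAt (fun u : ℝ => u ^ (p - 1)) ((p - 1) * r ^ (p - 2)) r := by
      have := Real.hasDerivAt_rpow_const (x := r) (p := p - 1) (Or.inl hr.ne')
      simpa [show p - 1 - 1 = p - 2 by ring] using this
    have h2 : HasDerivAt (fun u : ℝ => u ^ p) (p * r ^ (p - 1)) r :=
      Real.hasDerivAt_rpow_const (Or.inl hr.ne')
    have h3 : HasDerivAt (fun u : ℝ => p * u ^ (p - 1) - u ^ p / (4 * t))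
        (p * ((p - 1) * r ^ (p - 2)) - p * r ^ (p - 1) / (4 * t)) r :=
      (h1.const_mul p).sub (h2.div_const (4 * t))
    have h4 := (h3.const_mul c).fun_mul (hEd r)
    refine h4.congr_deriv ?_
    simp only [hg2]; field_simp; ring
  -- the quadratic form and its derivative
  set Q : EuclideanSpace ℝ (Fin N) → ℝ := fun y => ∑ i, (y i) ^ 2 with hQdef
  have hQnorm : ∀ y : EuclideanSpace ℝ (Fin N), Q y = ‖y‖ ^ 2 := by
    intro y
    rw [hQdef, EuclideanSpace.norm_eq, Real.sq_sqrt (by positivity)]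
    simp [Real.norm_eq_abs, sq_abs]
  set LB : EuclideanSpace ℝ (Fin N) → (EuclideanSpace ℝ (Fin N) →L[ℝ] ℝ) :=
    fun y => ∑ i, (2 * y i) • (EuclideanSpace.proj i : EuclideanSpace ℝ (Fin N) →L[ℝ] ℝ)
    with hLB
  have hQd : ∀ y : EuclideanSpace ℝ (Fin N), HasFDerivAt Q (LB y) y := by
    intro y
    have h : ∀ i : Fin N, HasFDerivAt (fun z : EuclideanSpace ℝ (Fin N) => (z i) ^ 2)
        ((2 * y i) • (EuclideanSpace.proj i : EuclideanSpace ℝ (Fin N) →L[ℝ] ℝ)) y := by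
      intro i
      have hpr := (EuclideanSpace.proj (𝕜 := ℝ) i).hasFDerivAt (x := y)
      have h2 := hpr.mul hpr
      have heq : (fun z : EuclideanSpace ℝ (Fin N) => (z i) ^ 2)
          = fun z : EuclideanSpace ℝ (Fin N) => z i * z i := by funext z; ring
      rw [heq, two_mul, add_smul]
      exact h2
    have hsum := HasFDerivAt.fun_sum (u := Finset.univ) (fun i _ => h i)
    simpa [hQdef, hLB] using hsum
  have hLBapp : ∀ (y : EuclideanSpace ℝ (Fin N)) (i : Fin N),
      LB y (EuclideanSpace.single i 1) = 2 * y i := by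
    intro y i
    rw [hLB]
    simp [EuclideanSpace.single_apply]
  have hQx : Q x = s := (hQnorm x).trans hs.symm
  -- v(·,t) as g0 ∘ Q
  have hCs : ∀ y : EuclideanSpace ℝ (Fin N), (‖y‖ ^ 2 : ℝ) ^ p = ‖y‖ ^ (-α) := by
    intro y
    rw [← Real.rpow_natCast ‖y‖ 2, ← Real.rpow_mul (norm_nonneg y)]
    congr 1
    push_cast
    rw [hp]; ring
  have hvu : (fun y => v y t) = fun y => c * (Q y) ^ p * E (Q y) := by
    funext y
    rw [hv y t, hQnorm y, hCs y, hc, hE]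
  -- time derivative
  have hfun : (fun τ => v x τ) =
      fun τ => (τ ^ q * ‖x‖ ^ (-α)) * Real.exp ((-s / 4) * τ⁻¹) := by
    funext τ
    rw [hv x τ, ← hs]
    have harg : -s / (4 * τ) = -s / 4 * τ⁻¹ := by ring
    rw [harg]
  have h1t : HasDerivAt (fun τ : ℝ => τ ^ q) (q * t ^ (q - 1)) t :=
    Real.hasDerivAt_rpow_const (Or.inl ht')
  have h2t : HasDerivAt (fun τ : ℝ => (-s / 4) * τ⁻¹) ((-s / 4) * (-(t ^ 2)⁻¹)) t :=
    (hasDerivAt_inv ht').const_mul _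
  have h3t := h2t.exp
  have hderiv : deriv (fun τ => v x τ) t =
      q * t ^ (q - 1) * ‖x‖ ^ (-α) * Real.exp ((-s / 4) * t⁻¹)
      + (t ^ q * ‖x‖ ^ (-α)) * (Real.exp ((-s / 4) * t⁻¹) * ((-s / 4) * (-(t ^ 2)⁻¹))) := by
    rw [hfun]
    exact ((h1t.mul_const _).mul h3t).deriv
  -- laplacian
  have hu0 : ∀ y : EuclideanSpace ℝ (Fin N), y ≠ 0 →
      HasFDerivAt (fun z => c * (Q z) ^ p * E (Q z)) (g1 (Q y) • LB y) y := by
    intro y hy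
    have hQy : 0 < Q y := by
      rw [hQnorm y]
      have : ‖y‖ ≠ 0 := norm_ne_zero_iff.mpr hy
      positivity
    have := (hg0d (Q y) hQy).comp_hasFDerivAt y (hQd y)
    exact this
  have hopen : {y : EuclideanSpace ℝ (Fin N) | y ≠ 0} ∈ nhds x := by
    have : IsOpen {y : EuclideanSpace ℝ (Fin N) | y ≠ 0} := isOpen_ne
    exact this.mem_nhds hx
  have hterm : ∀ i : Fin N,
      fderiv ℝ (fun y => fderiv ℝ (fun z => c * (Q z) ^ p * E (Q z)) y
          (EuclideanSpace.single i 1)) x (EuclideanSpace.single i 1)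
        = 2 * g1 s + (x i) ^ 2 * (4 * g2 s) := by
    intro i
    have heq : (fun y => fderiv ℝ (fun z => c * (Q z) ^ p * E (Q z)) y
        (EuclideanSpace.single i 1)) =ᶠ[nhds x] (fun y => g1 (Q y) * (2 * y i)) := by
      filter_upwards [hopen] with y hy
      rw [(hu0 y hy).fderiv]
      simp [hLBapp y i]
    rw [heq.fderiv_eq]
    have h1 : HasFDerivAt (fun y => g1 (Q y)) (g2 (Q x) • LB x) x := by
      have hQxpos : 0 < Q x := by rw [hQx]; exact hs0
      have := (hg1d (Q x) hQxpos).comp_hasFDerivAt x (hQd x)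
      exact this
    have h2 : HasFDerivAt (fun y : EuclideanSpace ℝ (Fin N) => 2 * y i)
        ((2 : ℝ) • (EuclideanSpace.proj i : EuclideanSpace ℝ (Fin N) →L[ℝ] ℝ)) x :=
      ((EuclideanSpace.proj (𝕜 := ℝ) i).hasFDerivAt (x := x)).const_mul 2
    have h3 := h1.fun_mul h2
    rw [h3.fderiv]
    simp only [ContinuousLinearMap.add_apply, ContinuousLinearMap.smul_apply, smul_eq_mul]
    rw [hLBapp x i, hQx]
    simp [EuclideanSpace.single_apply]
    ring
  have hlap : laplacian (fun y => v y t) x = 2 * N * g1 s + 4 * s * g2 s := by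
    rw [hvu]
    unfold laplacian
    rw [Finset.sum_congr rfl (fun i _ => hterm i)]
    rw [Finset.sum_add_distrib, Finset.sum_const, ← Finset.sum_mul]
    have hsum : (∑ i : Fin N, (x i) ^ 2) = s := by simpa [hQdef] using hQx
    rw [hsum]
    simp [Finset.card_univ, nsmul_eq_mul]
    ring
  -- finish
  rw [hderiv, hlap, hv x t, ← hs]
  have hCx : ‖x‖ ^ (-α) = s ^ p := (hCs x).symm
  have hDE : Real.exp ((-s / 4) * t⁻¹) = E s := by
    rw [hE]
    congr 1
    field_simp
  rw [hCx, hDE, hg1, hg2]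
  simp only
  have e1 : s ^ (p - 1) = s ^ (p - 2) * s := by
    rw [show p - 1 = (p - 2) + 1 by ring, Real.rpow_add hs0, Real.rpow_one]
  have e2 : s ^ p = s ^ (p - 2) * (s * s) := by
    have h := Real.rpow_add hs0 (p - 2) (1 + 1)
    rw [show p - 2 + (1 + 1) = p by ring] at h
    rw [h, Real.rpow_add hs0, Real.rpow_one]
  have e4 : t ^ (q - 1) = t ^ q * t⁻¹ := by
    rw [Real.rpow_sub ht, Real.rpow_one, div_eq_mul_inv]
  rw [e1, e2, e4, ← hα, hc, hp, hq]
  rw [show Real.exp (-s / (4 * t)) = E s from rfl]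
  field_simp
  ring
end

section
/- Let N ≥ 3 be an integer, a ∈ ℝ with −((N−2)/2)² < a < 0, and α = (N−2)/2 − √(((N−2)/2)² + a), so that α > 0. Let v(x,t) = t^(−N/2+α) · |x|^(−α) · e^(−|x|²/(4t)) for x ≠ 0 and t > 0. Then: (i) for every t₀ > 0 the function x ↦ v(x,t₀) is integrable on ℝ^N; (ii) for every t > 0 the function x ↦ v(x,t) is not essentially bounded on ℝ^N (its essential supremum with respect to Lebesgue measure is +∞). In particular this solution of the heat equation with potential a/|x|² has L¹ initial datum at any positive time but never lies in L^∞, so the classical L¹→L^∞ heat decay fails when a < 0. -/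
open MeasureTheory Real

open Set Metric in
lemma integrable_of_radial {E : Type*} [NormedAddCommGroup E] [NormedSpace ℝ E]
    [MeasurableSpace E] [BorelSpace E] [FiniteDimensional ℝ E] [Nontrivial E]
    (μ : Measure E) [μ.IsAddHaarMeasure] (f : ℝ → ℝ)
    (hf : IntegrableOn (fun r => r ^ (Module.finrank ℝ E - 1) * f r) (Set.Ioi (0 : ℝ))) :
    Integrable (fun x : E => f ‖x‖) μ := by
  have h0 : μ.restrict ({(0 : E)}ᶜ) = μ := MeasureTheory.restrict_compl_singleton 0
  rw [← h0, ← map_comap_subtype_coe (measurableSet_singleton (0 : E)).compl,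
    (MeasurableEmbedding.subtype_coe (measurableSet_singleton (0 : E)).compl).integrable_map_iff]
  have key := (μ.measurePreserving_homeomorphUnitSphereProd).integrable_comp_emb
    (Homeomorph.measurableEmbedding _)
    (g := fun p : sphere (0 : E) 1 × Ioi (0 : ℝ) => f p.2.1)
  have hcomp : ((fun p : sphere (0 : E) 1 × Ioi (0 : ℝ) => f p.2.1) ∘
      (homeomorphUnitSphereProd E)) = (fun x : E => f ‖x‖) ∘ (Subtype.val) := by funext x; simp
  rw [hcomp] at key
  rw [key]
  have h2 : Integrable (fun r : Ioi (0 : ℝ) => f r.1)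
      (Measure.volumeIoiPow (Module.finrank ℝ E - 1)) := by
    rw [Measure.volumeIoiPow, integrable_withDensity_iff
      (by fun_prop) (Filter.Eventually.of_forall fun r => ENNReal.ofReal_lt_top)]
    have : Integrable (fun r : Ioi (0 : ℝ) => r.1 ^ (Module.finrank ℝ E - 1) * f r.1)
        (Measure.comap Subtype.val volume) := by
      have hf' : Integrable (fun r => r ^ (Module.finrank ℝ E - 1) * f r)
          (volume.restrict (Ioi (0 : ℝ))) := hf
      rw [← map_comap_subtype_coe measurableSet_Ioi,
        (MeasurableEmbedding.subtype_coe measurableSet_Ioi).integrable_map_iff] at hf'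
      exact hf'
    refine this.congr (Filter.Eventually.of_forall fun r => ?_)
    dsimp only
    rw [ENNReal.toReal_ofReal (pow_nonneg r.2.out.le _)]
    ring
  have := (integrable_const (1 : ℝ) (μ := μ.toSphere)).mul_prod h2
  exact this.congr (Filter.Eventually.of_forall fun p => by simp)

open Set Metric in
theorem no_Linfty_bound_for_heat
    (N : ℕ) (hN : 3 ≤ N) (a : ℝ) (ha : -((((N : ℝ) - 2) / 2) ^ 2) < a) (ha' : a < 0)
    (v : EuclideanSpace ℝ (Fin N) → ℝ → ℝ)
    (hv : ∀ (x : EuclideanSpace ℝ (Fin N)) (t : ℝ), v x t =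
      t ^ (-(N : ℝ) / 2 + alphaPar N a) * ‖x‖ ^ (-(alphaPar N a)) *
        Real.exp (-‖x‖ ^ 2 / (4 * t))) :
    0 < alphaPar N a ∧
    (∀ t₀ : ℝ, 0 < t₀ →
      Integrable (fun x => v x t₀) (volume : Measure (EuclideanSpace ℝ (Fin N)))) ∧
    ∀ t : ℝ, 0 < t →
      essSup (fun x => (‖v x t‖₊ : ENNReal))
        (volume : Measure (EuclideanSpace ℝ (Fin N))) = ⊤ := by
  haveI : Nonempty (Fin N) := Fin.pos_iff_nonempty.mp (by omega)
  haveI : Nontrivial (EuclideanSpace ℝ (Fin N)) := inferInstance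
  have hN3 : (3 : ℝ) ≤ (N : ℝ) := by exact_mod_cast hN
  set α := alphaPar N a with hαdef
  have hc0 : (0 : ℝ) < ((N : ℝ) - 2) / 2 := by linarith
  have hca : (0 : ℝ) < (((N : ℝ) - 2) / 2) ^ 2 + a := by linarith
  have hsq : Real.sqrt ((((N : ℝ) - 2) / 2) ^ 2 + a) < ((N : ℝ) - 2) / 2 := by
    have h := Real.sqrt_lt_sqrt hca.le
      (show (((N : ℝ) - 2) / 2) ^ 2 + a < (((N : ℝ) - 2) / 2) ^ 2 by linarith)
    rwa [Real.sqrt_sq hc0.le] at h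
  have hα0 : 0 < α := by
    rw [hαdef, alphaPar]; linarith
  have hαc : α ≤ ((N : ℝ) - 2) / 2 := by
    rw [hαdef, alphaPar]
    have := Real.sqrt_nonneg ((((N : ℝ) - 2) / 2) ^ 2 + a)
    linarith
  have hαN1 : -1 < (N : ℝ) - 1 - α := by linarith
  refine ⟨hα0, ?_, ?_⟩
  · -- integrability
    intro t₀ ht₀
    have hb : (0 : ℝ) < 1 / (4 * t₀) := by positivity
    have base := integrableOn_rpow_mul_exp_neg_mul_sq hb hαN1
    have hrad : IntegrableOn
        (fun r : ℝ => r ^ (Module.finrank ℝ (EuclideanSpace ℝ (Fin N)) - 1) *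
          (r ^ (-α) * Real.exp (-r ^ 2 / (4 * t₀)))) (Set.Ioi (0 : ℝ)) := by
      rw [finrank_euclideanSpace_fin]
      refine (base.congr_fun (fun r hr => ?_) measurableSet_Ioi)
      have hr0 : (0 : ℝ) < r := hr
      have hcast : ((N - 1 : ℕ) : ℝ) = (N : ℝ) - 1 := by
        have : 1 ≤ N := by omega
        push_cast [this]
        ring
      beta_reduce
      rw [show (N : ℝ) - 1 - α = ((N - 1 : ℕ) : ℝ) + (-α) by rw [hcast]; ring,
        Real.rpow_add hr0, Real.rpow_natCast, mul_assoc]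
      congr 2
      ring_nf
    have hint : Integrable
        (fun x : EuclideanSpace ℝ (Fin N) =>
          ‖x‖ ^ (-α) * Real.exp (-‖x‖ ^ 2 / (4 * t₀))) volume :=
      integrable_of_radial volume (fun r => r ^ (-α) * Real.exp (-r ^ 2 / (4 * t₀))) hrad
    have := hint.const_mul (t₀ ^ (-(N : ℝ) / 2 + α))
    refine this.congr (Filter.Eventually.of_forall fun x => ?_)
    dsimp only
    rw [hv x t₀]
    ring
  · -- essSup = ⊤
    intro t ht
    by_contra htop
    set M := essSup (fun x => (‖v x t‖₊ : ENNReal))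
        (volume : Measure (EuclideanSpace ℝ (Fin N))) with hMdef
    have hC : (0 : ℝ) < t ^ (-(N : ℝ) / 2 + α) := Real.rpow_pos_of_pos ht _
    set C := t ^ (-(N : ℝ) / 2 + α) with hCdef
    set Ex := Real.exp (-(1 / (4 * t))) with hExdef
    have hEx : (0 : ℝ) < Ex := Real.exp_pos _
    set b := max (M.toReal / (C * Ex)) 1 + 1 with hbdef
    have hb1 : (1 : ℝ) < b := by
      have := le_max_right (M.toReal / (C * Ex)) 1
      rw [hbdef]; linarith
    have hbq : M.toReal / (C * Ex) < b := by
      have := le_max_left (M.toReal / (C * Ex)) 1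
      rw [hbdef]; linarith
    have hb0 : (0 : ℝ) < b := by linarith
    set r := b ^ (-α⁻¹) with hrdef
    have hr0 : (0 : ℝ) < r := Real.rpow_pos_of_pos hb0 _
    have hr1 : r ≤ 1 :=
      Real.rpow_le_one_of_one_le_of_nonpos hb1.le (by simp [hα0.le, inv_nonneg.mpr hα0.le])
    have hrα : r ^ (-α) = b := by
      rw [hrdef, ← Real.rpow_mul hb0.le]
      rw [show -α⁻¹ * -α = 1 by field_simp]
      exact Real.rpow_one b
    have hMt : M.toReal < b * (C * Ex) := (div_lt_iff₀ (by positivity)).mp hbq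
    have key : ∀ x : EuclideanSpace ℝ (Fin N),
        x ∈ ball (0 : EuclideanSpace ℝ (Fin N)) r \ {0} →
        M < (‖v x t‖₊ : ENNReal) := by
      intro x hx
      have hx0 : x ≠ 0 := hx.2
      have hxn : (0 : ℝ) < ‖x‖ := norm_pos_iff.mpr hx0
      have hxr : ‖x‖ ≤ r := le_of_lt (by simpa using hx.1)
      have h1 : b ≤ ‖x‖ ^ (-α) := by
        rw [← hrα]
        exact Real.rpow_le_rpow_of_nonpos hxn hxr (neg_nonpos.mpr hα0.le)
      have h2 : Ex ≤ Real.exp (-‖x‖ ^ 2 / (4 * t)) := by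
        rw [hExdef]
        apply Real.exp_le_exp.mpr
        have hsq1 : ‖x‖ ^ 2 ≤ 1 := by nlinarith
        rw [neg_div]
        apply neg_le_neg
        have h4t : (0 : ℝ) < 4 * t := by linarith
        gcongr
      have hvx : b * (C * Ex) ≤ v x t := by
        rw [hv x t, ← hCdef]
        have hxa : (0 : ℝ) ≤ ‖x‖ ^ (-α) := Real.rpow_nonneg hxn.le _
        calc b * (C * Ex) = C * (b * Ex) := by ring
          _ ≤ C * (‖x‖ ^ (-α) * Real.exp (-‖x‖ ^ 2 / (4 * t))) :=
              mul_le_mul_of_nonneg_left (mul_le_mul h1 h2 hEx.le hxa) hC.le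
          _ = C * ‖x‖ ^ (-α) * Real.exp (-‖x‖ ^ 2 / (4 * t)) := by ring
      have hvpos : 0 < v x t := lt_of_lt_of_le (by positivity) hvx
      have hMv : M.toReal < v x t := lt_of_lt_of_le hMt hvx
      have : (‖v x t‖₊ : ENNReal) = ENNReal.ofReal (v x t) := by
        rw [← enorm_eq_nnnorm, ← ofReal_norm, Real.norm_eq_abs, abs_of_pos hvpos]
      rw [this]
      exact (ENNReal.lt_ofReal_iff_toReal_lt htop).mpr hMv
    have hae : ∀ᵐ x ∂(volume : Measure (EuclideanSpace ℝ (Fin N))),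
        (‖v x t‖₊ : ENNReal) ≤ M := ENNReal.ae_le_essSup _
    have h0 : volume {x : EuclideanSpace ℝ (Fin N) |
        ¬ ((‖v x t‖₊ : ENNReal) ≤ M)} = 0 := by
      exact ae_iff.mp hae
    have hsub : ball (0 : EuclideanSpace ℝ (Fin N)) r \ {0} ⊆
        {x : EuclideanSpace ℝ (Fin N) | ¬ ((‖v x t‖₊ : ENNReal) ≤ M)} :=
      fun x hx => not_le.mpr (key x hx)
    have hz : volume (ball (0 : EuclideanSpace ℝ (Fin N)) r \ {0}) = 0 :=
      measure_mono_null hsub h0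
    rw [measure_diff_null (measure_singleton _)] at hz
    exact (measure_ball_pos volume (0 : EuclideanSpace ℝ (Fin N)) hr0).ne' hz
end

section
/- Let N ≥ 3 be an integer, a ≥ 0, and α = (N−2)/2 − √(((N−2)/2)² + a), so that α ≤ 0. Let u(x,t) = (1+t²)^(−N/4+α/2) · |x|^(−α) · exp(−|x|²/(4(1+t²))) · exp(i t |x|²/(4(1+t²))) · exp(−i (N/2 − α) arctan t), a solution of the Schrödinger equation i ∂_t u = −Δu + a u/|x|². Then the weighted improved time decay holds: for every x ≠ 0 and every t ∈ ℝ, |x|^α · |u(x,t)| ≤ (1+t²)^(−N/4+α/2); in particular the weighted sup norm sup_{x≠0} |x|^α |u(x,t)| decays like |t|^(−N/2+α) as |t| → ∞, faster than the classical rate |t|^(−N/2). -/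
open MeasureTheory Real

theorem improved_schrodinger_decay
    (N : ℕ) (hN : 3 ≤ N) (a : ℝ) (ha : 0 ≤ a)
    (u : EuclideanSpace ℝ (Fin N) → ℝ → ℂ)
    (hu : ∀ (x : EuclideanSpace ℝ (Fin N)) (t : ℝ), u x t =
      (((1 + t ^ 2) ^ (-(N : ℝ) / 4 + alphaPar N a / 2) : ℝ) : ℂ) *
      ((‖x‖ ^ (-(alphaPar N a)) : ℝ) : ℂ) *
      ((Real.exp (-‖x‖ ^ 2 / (4 * (1 + t ^ 2))) : ℝ) : ℂ) *
      Complex.exp (Complex.I * ((t * ‖x‖ ^ 2 / (4 * (1 + t ^ 2)) : ℝ) : ℂ)) *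
      Complex.exp (-Complex.I * ((((N : ℝ) / 2 - alphaPar N a) * Real.arctan t : ℝ) : ℂ))) :
    alphaPar N a ≤ 0 ∧
    ∀ (x : EuclideanSpace ℝ (Fin N)), x ≠ 0 → ∀ t : ℝ,
      ‖x‖ ^ (alphaPar N a) * ‖u x t‖ ≤
        (1 + t ^ 2) ^ (-(N : ℝ) / 4 + alphaPar N a / 2) := by
  have hN2 : (0 : ℝ) ≤ ((N : ℝ) - 2) / 2 := by
    have : (3 : ℝ) ≤ (N : ℝ) := by exact_mod_cast hN
    linarith
  have hα : alphaPar N a ≤ 0 := by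
    unfold alphaPar
    have h1 : ((N : ℝ) - 2) / 2 ≤ Real.sqrt ((((N : ℝ) - 2) / 2) ^ 2 + a) := by
      calc ((N : ℝ) - 2) / 2 = Real.sqrt ((((N : ℝ) - 2) / 2) ^ 2) := (Real.sqrt_sq hN2).symm
        _ ≤ _ := Real.sqrt_le_sqrt (by linarith)
    linarith
  refine ⟨hα, fun x hx t => ?_⟩
  have hxn : (0 : ℝ) < ‖x‖ := norm_pos_iff.mpr hx
  have ht : (0 : ℝ) < 1 + t ^ 2 := by positivity
  rw [hu]
  have h1 : ∀ r : ℝ, ‖Complex.exp (Complex.I * (r : ℂ))‖ = 1 := fun r => by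
    rw [mul_comm, Complex.norm_exp_ofReal_mul_I]
  have h2 : ∀ r : ℝ, ‖Complex.exp (-Complex.I * (r : ℂ))‖ = 1 := fun r => by
    rw [show -Complex.I * (r : ℂ) = ((-r : ℝ) : ℂ) * Complex.I by push_cast; ring,
      Complex.norm_exp_ofReal_mul_I]
  rw [norm_mul, norm_mul, norm_mul, norm_mul, h1 _, h2 _, mul_one, mul_one]
  simp only [Complex.norm_real, Real.norm_eq_abs]
  rw [abs_of_nonneg (Real.rpow_nonneg ht.le _),
    abs_of_nonneg (Real.rpow_nonneg hxn.le _),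
    abs_of_nonneg (Real.exp_pos _).le]
  have hxα : ‖x‖ ^ alphaPar N a * ‖x‖ ^ (-(alphaPar N a)) = 1 := by
    rw [← Real.rpow_add hxn]; simp
  calc ‖x‖ ^ alphaPar N a *
        ((1 + t ^ 2) ^ (-(N : ℝ) / 4 + alphaPar N a / 2) * ‖x‖ ^ (-(alphaPar N a)) *
          Real.exp (-‖x‖ ^ 2 / (4 * (1 + t ^ 2))))
      = (1 + t ^ 2) ^ (-(N : ℝ) / 4 + alphaPar N a / 2) *
          Real.exp (-‖x‖ ^ 2 / (4 * (1 + t ^ 2))) := by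
        rw [show ‖x‖ ^ alphaPar N a *
            ((1 + t ^ 2) ^ (-(N : ℝ) / 4 + alphaPar N a / 2) * ‖x‖ ^ (-(alphaPar N a)) *
              Real.exp (-‖x‖ ^ 2 / (4 * (1 + t ^ 2)))) =
            (‖x‖ ^ alphaPar N a * ‖x‖ ^ (-(alphaPar N a))) *
              ((1 + t ^ 2) ^ (-(N : ℝ) / 4 + alphaPar N a / 2) *
                Real.exp (-‖x‖ ^ 2 / (4 * (1 + t ^ 2)))) by ring, hxα, one_mul]
    _ ≤ (1 + t ^ 2) ^ (-(N : ℝ) / 4 + alphaPar N a / 2) * 1 := by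
        apply mul_le_mul_of_nonneg_left _ (Real.rpow_nonneg ht.le _)
        rw [Real.exp_le_one_iff]
        have : (0:ℝ) ≤ ‖x‖ ^ 2 / (4 * (1 + t ^ 2)) := by positivity
        rw [neg_div]; linarith
    _ = _ := mul_one _
end
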